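/- arXiv:2009.09141 — 3 statements merged into one kernel-verified Lean document; each statement's English description precedes it below -/
import Mathlib

section
/- For integers n ≥ 2 and 0 ≤ k ≤ n−2 and every real t ≥ 0, the following inequality between normalized integrals holds: [∫_{[0,t]^{n-k-1}} ∏_{1≤i<j≤n-k-1} (λ_i − λ_j)² · ∏_{i=1}^{n-k-1} λ_i^{2k+2} e^{−λ_i} dλ] / [∫_{[0,∞)^{n-k-1}} ∏_{1≤i<j≤n-k-1} (λ_i − λ_j)² · ∏_{i=1}^{n-k-1} λ_i^{2k+2} e^{−λ_i} dλ] ≥ [∫_{[0,t]^{n-k}} ∏_{1≤i<j≤n-k} (λ_i − λ_j)² · ∏_{i=1}^{n-k} λ_i^{2k} e^{−λ_i} dλ] / [∫_{[0,∞)^{n-k}} ∏_{1≤i<j≤n-k} (λ_i − λ_j)² · ∏_{i=1}^{n-k} λ_i^{2k} e^{−λ_i} dλ]. -/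
open MeasureTheory

/-- The (unnormalized) Wishart-type integral: `m` eigenvalues in `D`, squared Vandermonde,
weight `λ^p e^{-λ}`. -/
noncomputable def wishartInt (m p : ℕ) (D : Set ℝ) : ℝ :=
  ∫ x in Set.univ.pi (fun _ : Fin m => D),
    ((∏ i : Fin m, ∏ j ∈ Finset.Ioi i, (x i - x j) ^ 2) *
      ∏ i : Fin m, ((x i) ^ p * Real.exp (-(x i))))
    ∂(Measure.pi fun _ : Fin m => volume)

open MeasureTheory Real Set Finset

noncomputable def wgt (p : ℕ) (x : ℝ) : ℝ := x ^ p * Real.exp (-x)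

noncomputable def ip (p : ℕ) (D : Set ℝ) (f g : ℝ → ℝ) : ℝ :=
  ∫ x in D, f x * g x * wgt p x

lemma intOn_pow_exp (i : ℕ) :
    IntegrableOn (fun x : ℝ => x ^ i * Real.exp (-x)) (Set.Ici 0) := by
  have h := Real.GammaIntegral_convergent (s := (i : ℝ) + 1) (by positivity)
  rw [integrableOn_Ici_iff_integrableOn_Ioi]
  have : ∀ x ∈ Set.Ioi (0:ℝ), Real.exp (-x) * x ^ (((i:ℝ) + 1) - 1) = x ^ i * Real.exp (-x) := by
    intro x hx
    rw [add_sub_cancel_right, Real.rpow_natCast, mul_comm]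
  exact (integrableOn_congr_fun this measurableSet_Ioi).mp h

lemma intOn_polyexp (S : Polynomial ℝ) {D : Set ℝ} (hD : MeasurableSet D)
    (hsub : D ⊆ Set.Ici 0) :
    IntegrableOn (fun x : ℝ => S.eval x * Real.exp (-x)) D := by
  refine IntegrableOn.mono_set ?_ hsub
  have : ∀ x : ℝ, S.eval x * Real.exp (-x)
      = ∑ i ∈ Finset.range (S.natDegree + 1), S.coeff i * (x ^ i * Real.exp (-x)) := by
    intro x
    rw [Polynomial.eval_eq_sum_range, Finset.sum_mul]
    exact Finset.sum_congr rfl fun i _ => by ring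
  simp_rw [this]
  exact integrable_finset_sum _ fun i _ => (intOn_pow_exp i).const_mul _

def IsPolyFun (f : ℝ → ℝ) : Prop := ∃ Q : Polynomial ℝ, ∀ x, f x = Q.eval x

lemma IsPolyFun.pow (r : ℕ) : IsPolyFun (fun x : ℝ => x ^ r) :=
  ⟨Polynomial.X ^ r, fun x => by simp⟩

lemma intOn_mul_mul_wgt {f g : ℝ → ℝ} (hf : IsPolyFun f) (hg : IsPolyFun g)
    (p : ℕ) {D : Set ℝ} (hD : MeasurableSet D) (hsub : D ⊆ Set.Ici 0) :
    IntegrableOn (fun x => f x * g x * wgt p x) D := by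
  obtain ⟨Q, hQ⟩ := hf
  obtain ⟨R, hR⟩ := hg
  have : ∀ x : ℝ, f x * g x * wgt p x = (Q * R * Polynomial.X ^ p).eval x * Real.exp (-x) := by
    intro x
    simp [hQ, hR, wgt]
    ring
  simp_rw [this]
  exact intOn_polyexp _ hD hsub

lemma indicator_pi_prod {m : ℕ} (D : Set ℝ) (h : Fin m → ℝ → ℝ) (x : Fin m → ℝ) :
    (Set.univ.pi fun _ : Fin m => D).indicator (fun y => ∏ i, h i (y i)) x
      = ∏ i, D.indicator (h i) (x i) := by
  by_cases hx : x ∈ Set.univ.pi fun _ : Fin m => D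
  · rw [Set.indicator_of_mem hx]
    exact Finset.prod_congr rfl fun i _ =>
      (Set.indicator_of_mem (hx i (Set.mem_univ i)) _).symm
  · rw [Set.indicator_of_notMem hx]
    obtain ⟨i, hi⟩ : ∃ i, x i ∉ D := by simpa [Set.mem_pi] using hx
    exact (Finset.prod_eq_zero (Finset.mem_univ i) (Set.indicator_of_notMem hi _)).symm

lemma indicator_pi_prod' {m : ℕ} (D : Set ℝ) (h : Fin m → ℝ → ℝ) :
    (Set.univ.pi fun _ : Fin m => D).indicator (fun y => ∏ i, h i (y i))
      = fun x => ∏ i, D.indicator (h i) (x i) :=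
  funext fun x => indicator_pi_prod D h x

lemma integrableOn_pi_prod {m : ℕ} {D : Set ℝ} (hD : MeasurableSet D)
    (h : Fin m → ℝ → ℝ) (hint : ∀ i, IntegrableOn (h i) D) :
    IntegrableOn (fun x : Fin m → ℝ => ∏ i, h i (x i))
      (Set.univ.pi fun _ : Fin m => D) (Measure.pi fun _ : Fin m => volume) := by
  rw [IntegrableOn, show (Measure.pi fun _ : Fin m => (volume : Measure ℝ)) = volume
      from volume_pi.symm]
  have : Integrable ((Set.univ.pi fun _ : Fin m => D).indicator
      (fun x : Fin m → ℝ => ∏ i, h i (x i))) := by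
    rw [indicator_pi_prod']
    exact Integrable.fintype_prod fun i => (integrable_indicator_iff hD).mpr (hint i)
  exact (integrable_indicator_iff (MeasurableSet.univ_pi fun _ => hD)).mp this

lemma setIntegral_pi_prod {m : ℕ} {D : Set ℝ} (hD : MeasurableSet D)
    (h : Fin m → ℝ → ℝ) :
    ∫ x in Set.univ.pi (fun _ : Fin m => D), (∏ i, h i (x i))
        ∂(Measure.pi fun _ : Fin m => volume)
      = ∏ i, ∫ x in D, h i x := by
  rw [show (Measure.pi fun _ : Fin m => (volume : Measure ℝ)) = volume from volume_pi.symm,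
    ← integral_indicator (MeasurableSet.univ_pi fun _ => hD)]
  simp_rw [indicator_pi_prod]
  rw [volume_pi, MeasureTheory.integral_fintype_prod_eq_prod
    (fun i => D.indicator (h i))]
  exact Finset.prod_congr rfl fun i _ => integral_indicator hD

open Equiv in
lemma andreief {M p : ℕ} {D : Set ℝ} (hD : MeasurableSet D) (hsub : D ⊆ Set.Ici 0)
    (φ : Fin M → ℝ → ℝ) (hpoly : ∀ i, IsPolyFun (φ i)) :
    ∫ x in Set.univ.pi (fun _ : Fin M => D),
        ((Matrix.of fun i j => φ i (x j)).det ^ 2 * ∏ j, wgt p (x j))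
        ∂(Measure.pi fun _ : Fin M => volume)
      = (M.factorial : ℝ) * (Matrix.of fun i j => ip p D (φ i) (φ j)).det := by
  classical
  have hpt : ∀ x : Fin M → ℝ,
      (Matrix.of fun i j => φ i (x j)).det ^ 2 * ∏ j, wgt p (x j)
        = ∑ σ : Perm (Fin M), ∑ τ : Perm (Fin M),
            (((Perm.sign σ : ℤ) : ℝ) * ((Perm.sign τ : ℤ) : ℝ)) *
              ∏ j, (φ (σ j) (x j) * φ (τ j) (x j) * wgt p (x j)) := by
    intro x
    rw [Matrix.det_apply', sq, Finset.sum_mul_sum, Finset.sum_mul]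
    refine Finset.sum_congr rfl fun σ _ => ?_
    rw [Finset.sum_mul]
    refine Finset.sum_congr rfl fun τ _ => ?_
    simp only [Matrix.of_apply]
    rw [Finset.prod_mul_distrib, Finset.prod_mul_distrib]
    ring
  simp_rw [hpt]
  have hterm : ∀ σ τ : Perm (Fin M),
      IntegrableOn (fun x : Fin M → ℝ =>
          (((Perm.sign σ : ℤ) : ℝ) * ((Perm.sign τ : ℤ) : ℝ)) *
            ∏ j, (φ (σ j) (x j) * φ (τ j) (x j) * wgt p (x j)))
        (Set.univ.pi fun _ : Fin M => D) (Measure.pi fun _ : Fin M => volume) :=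
    fun σ τ => (integrableOn_pi_prod hD _
      (fun j => intOn_mul_mul_wgt (hpoly _) (hpoly _) p hD hsub)).const_mul _
  rw [integral_finset_sum _ (fun σ _ => integrable_finset_sum _ fun τ _ => hterm σ τ)]
  have hint : ∀ σ τ : Perm (Fin M),
      (∫ x in Set.univ.pi (fun _ : Fin M => D),
          ((((Perm.sign σ : ℤ) : ℝ) * ((Perm.sign τ : ℤ) : ℝ)) *
            ∏ j, (φ (σ j) (x j) * φ (τ j) (x j) * wgt p (x j)))
          ∂(Measure.pi fun _ : Fin M => volume))
        = (((Perm.sign σ : ℤ) : ℝ) * ((Perm.sign τ : ℤ) : ℝ)) *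
            ∏ j, ip p D (φ (σ j)) (φ (τ j)) := by
    intro σ τ
    rw [MeasureTheory.integral_const_mul]
    congr 1
    exact setIntegral_pi_prod hD (fun j y => φ (σ j) y * φ (τ j) y * wgt p y)
  calc
    ∑ σ : Perm (Fin M), ∫ x in Set.univ.pi (fun _ : Fin M => D),
        (∑ τ : Perm (Fin M),
          ((((Perm.sign σ : ℤ) : ℝ) * ((Perm.sign τ : ℤ) : ℝ)) *
            ∏ j, (φ (σ j) (x j) * φ (τ j) (x j) * wgt p (x j))))
        ∂(Measure.pi fun _ : Fin M => volume)
      = ∑ σ : Perm (Fin M), ∑ τ : Perm (Fin M),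
          (((Perm.sign σ : ℤ) : ℝ) * ((Perm.sign τ : ℤ) : ℝ)) *
            ∏ j, ip p D (φ (σ j)) (φ (τ j)) := by
        refine Finset.sum_congr rfl fun σ _ => ?_
        rw [integral_finset_sum _ (fun τ _ => hterm σ τ)]
        exact Finset.sum_congr rfl fun τ _ => hint σ τ
    _ = ∑ σ : Perm (Fin M), ((Perm.sign σ : ℤ) : ℝ) *
          ((Matrix.of fun a b : Fin M => ip p D (φ (σ b)) (φ a)).det) := by
        refine Finset.sum_congr rfl fun σ _ => ?_
        rw [Matrix.det_apply', Finset.mul_sum]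
        refine Finset.sum_congr rfl fun τ _ => ?_
        simp only [Matrix.of_apply]
        ring
    _ = (M.factorial : ℝ) * (Matrix.of fun i j => ip p D (φ i) (φ j)).det := by
        have hdet : ∀ σ : Perm (Fin M),
            (Matrix.of fun a b : Fin M => ip p D (φ (σ b)) (φ a)).det
              = ((Perm.sign σ : ℤ) : ℝ) *
                  (Matrix.of fun i j => ip p D (φ i) (φ j)).det := by
          intro σ
          have h1 : (Matrix.of fun a b : Fin M => ip p D (φ (σ b)) (φ a))
              = ((Matrix.of fun i j => ip p D (φ i) (φ j)).transpose).submatrix id σ := by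
            ext a b
            simp [Matrix.transpose, Matrix.submatrix]
          rw [h1, Matrix.det_permute', Matrix.det_transpose]
        simp_rw [hdet]
        have hsq : ∀ σ : Perm (Fin M),
            ((Perm.sign σ : ℤ) : ℝ) * (((Perm.sign σ : ℤ) : ℝ) *
              (Matrix.of fun i j => ip p D (φ i) (φ j)).det)
            = (Matrix.of fun i j => ip p D (φ i) (φ j)).det := by
          intro σ
          rcases Int.units_eq_one_or (Perm.sign σ) with h | h <;> rw [h] <;> norm_num
        simp_rw [hsq]
        rw [Finset.sum_const, Finset.card_univ, Fintype.card_perm, Fintype.card_fin,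
          nsmul_eq_mul]

noncomputable def wishartInt' (m p : ℕ) (D : Set ℝ) : ℝ := wishartInt m p D

lemma vdm_sq {m : ℕ} (x : Fin m → ℝ) :
    (Matrix.of fun i j : Fin m => (x j) ^ (i : ℕ)).det ^ 2
      = ∏ i : Fin m, ∏ j ∈ Finset.Ioi i, (x i - x j) ^ 2 := by
  have h : (Matrix.of fun i j : Fin m => (x j) ^ (i : ℕ))
      = (Matrix.vandermonde x).transpose := by
    ext i j; simp [Matrix.vandermonde]
  rw [h, Matrix.det_transpose, Matrix.det_vandermonde, ← Finset.prod_pow]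
  refine Finset.prod_congr rfl fun i _ => ?_
  rw [← Finset.prod_pow]
  exact Finset.prod_congr rfl fun j _ => by ring

lemma wishart_eq_gram (m p : ℕ) {D : Set ℝ} (hD : MeasurableSet D)
    (hsub : D ⊆ Set.Ici 0) :
    wishartInt' m p D = (m.factorial : ℝ) *
      (Matrix.of fun i j : Fin m =>
        ip p D (fun y => y ^ (i : ℕ)) (fun y => y ^ (j : ℕ))).det := by
  rw [← andreief hD hsub (fun i y => y ^ (i : ℕ)) (fun i => IsPolyFun.pow _)]
  unfold wishartInt' wishartInt
  apply integral_congr_ae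
  filter_upwards with x
  rw [vdm_sq]
  rfl

lemma wishart_shift_eq_gram (m p : ℕ) {D : Set ℝ} (hD : MeasurableSet D)
    (hsub : D ⊆ Set.Ici 0) :
    wishartInt' m (p + 2) D = (m.factorial : ℝ) *
      (Matrix.of fun i j : Fin m =>
        ip p D (fun y => y ^ ((i : ℕ) + 1)) (fun y => y ^ ((j : ℕ) + 1))).det := by
  rw [← andreief hD hsub (fun i y => y ^ ((i : ℕ) + 1)) (fun i => IsPolyFun.pow _)]
  unfold wishartInt' wishartInt
  apply integral_congr_ae
  filter_upwards with x
  have hdet : (Matrix.of fun i j : Fin m => (x j) ^ ((i : ℕ) + 1)).det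
      = (∏ j, x j) * (Matrix.of fun i j : Fin m => (x j) ^ (i : ℕ)).det := by
    have h : (Matrix.of fun i j : Fin m => (x j) ^ ((i : ℕ) + 1))
        = Matrix.of (fun i j : Fin m => x j * (Matrix.of fun i j : Fin m => (x j) ^ (i : ℕ)) i j) := by
      ext i j; simp [pow_succ]; ring
    rw [h, Matrix.det_mul_row]
  rw [hdet, mul_pow, vdm_sq]
  unfold wgt
  rw [← Finset.prod_pow, ← Finset.prod_mul_distrib, mul_assoc, ← Finset.prod_mul_distrib,
    ← Finset.prod_mul_distrib]
  exact Finset.prod_congr rfl fun i _ => by ring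

lemma IsPolyFun.msum {r : ℕ} (a : Fin r → ℝ) (e : Fin r → ℕ) :
    IsPolyFun (fun x : ℝ => ∑ i, a i * x ^ (e i)) := by
  refine ⟨∑ i, Polynomial.C (a i) * Polynomial.X ^ (e i), fun x => ?_⟩
  rw [Polynomial.eval_finset_sum]
  exact Finset.sum_congr rfl fun i _ => by simp

lemma ip_comm (p : ℕ) (D : Set ℝ) (f g : ℝ → ℝ) : ip p D f g = ip p D g f := by
  unfold ip
  apply integral_congr_ae
  filter_upwards with x
  ring

lemma ip_sum_left {p r : ℕ} {D : Set ℝ} (hD : MeasurableSet D) (hsub : D ⊆ Set.Ici 0)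
    (ψ : Fin r → ℝ → ℝ) (a : Fin r → ℝ) (g : ℝ → ℝ)
    (hψ : ∀ i, IsPolyFun (ψ i)) (hg : IsPolyFun g) :
    ip p D (fun x => ∑ i, a i * ψ i x) g = ∑ i, a i * ip p D (ψ i) g := by
  unfold ip
  have h : ∀ x : ℝ, (∑ i, a i * ψ i x) * g x * wgt p x
      = ∑ i, a i * (ψ i x * g x * wgt p x) := by
    intro x
    rw [Finset.sum_mul, Finset.sum_mul]
    exact Finset.sum_congr rfl fun i _ => by ring
  simp_rw [h]
  rw [integral_finset_sum _ fun i _ =>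
    ((intOn_mul_mul_wgt (hψ i) hg p hD hsub).const_mul _)]
  exact Finset.sum_congr rfl fun i _ => MeasureTheory.integral_const_mul _ _

lemma ip_sum_right {p r : ℕ} {D : Set ℝ} (hD : MeasurableSet D) (hsub : D ⊆ Set.Ici 0)
    (ψ : Fin r → ℝ → ℝ) (a : Fin r → ℝ) (g : ℝ → ℝ)
    (hψ : ∀ i, IsPolyFun (ψ i)) (hg : IsPolyFun g) :
    ip p D g (fun x => ∑ i, a i * ψ i x) = ∑ i, a i * ip p D g (ψ i) := by
  rw [ip_comm, ip_sum_left hD hsub ψ a g hψ hg]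
  exact Finset.sum_congr rfl fun i _ => by rw [ip_comm]

lemma ip_self_pos {p : ℕ} {D : Set ℝ} (hD : MeasurableSet D) (hsub : D ⊆ Set.Ici 0)
    {s : ℝ} (hs : 0 < s) (hIoo : Set.Ioo 0 s ⊆ D)
    (Q : Polynomial ℝ) (hQ : Q ≠ 0) :
    0 < ip p D (fun x => Q.eval x) (fun x => Q.eval x) := by
  unfold ip
  rw [setIntegral_pos_iff_support_of_nonneg_ae]
  · have hsupp : Set.Ioo 0 s \ {x | Q.IsRoot x}
        ⊆ Function.support (fun x => Q.eval x * Q.eval x * wgt p x) ∩ D := by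
      rintro x ⟨hx1, hx2⟩
      refine ⟨?_, hIoo hx1⟩
      have hx0 : 0 < x := hx1.1
      have hQx : Q.eval x ≠ 0 := fun h => hx2 h
      have : Q.eval x * Q.eval x * wgt p x ≠ 0 := by
        unfold wgt
        positivity
      simpa [Function.mem_support] using this
    calc (0 : ENNReal) < volume (Set.Ioo 0 s \ {x | Q.IsRoot x}) := by
          rw [measure_diff_null ((Polynomial.finite_setOf_isRoot hQ).measure_zero volume)]
          simpa [Real.volume_Ioo] using hs
      _ ≤ _ := measure_mono hsupp
  · refine ae_restrict_of_forall_mem hD fun x hx => ?_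
    have hx0 : (0:ℝ) ≤ x := hsub hx
    unfold wgt
    have : 0 ≤ Q.eval x * Q.eval x := mul_self_nonneg _
    positivity
  · exact intOn_mul_mul_wgt ⟨Q, fun _ => rfl⟩ ⟨Q, fun _ => rfl⟩ p hD hsub

lemma ip_self_nonneg {p : ℕ} {D : Set ℝ} (hD : MeasurableSet D) (hsub : D ⊆ Set.Ici 0)
    (f : ℝ → ℝ) : 0 ≤ ip p D f f := by
  refine MeasureTheory.setIntegral_nonneg hD fun x hx => ?_
  have hx0 : (0:ℝ) ≤ x := hsub hx
  have : 0 ≤ f x * f x := mul_self_nonneg _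
  unfold wgt
  positivity

noncomputable def polyOf {M : ℕ} (a : Fin M → ℝ) (e : Fin M → ℕ) : Polynomial ℝ :=
  ∑ i, Polynomial.C (a i) * Polynomial.X ^ (e i)

lemma polyOf_eval {M : ℕ} (a : Fin M → ℝ) (e : Fin M → ℕ) (x : ℝ) :
    (polyOf a e).eval x = ∑ i, a i * x ^ (e i) := by
  unfold polyOf
  rw [Polynomial.eval_finset_sum]
  exact Finset.sum_congr rfl fun i _ => by simp

lemma polyOf_ne_zero {M : ℕ} (a : Fin M → ℝ) (e : Fin M → ℕ) (he : Function.Injective e)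
    (ha : a ≠ 0) : polyOf a e ≠ 0 := by
  obtain ⟨i₀, hi₀⟩ : ∃ i, a i ≠ 0 := by
    by_contra h
    push_neg at h
    exact ha (funext fun i => h i)
  intro hzero
  have hcoeff : (polyOf a e).coeff (e i₀) = a i₀ := by
    unfold polyOf
    rw [Polynomial.finset_sum_coeff]
    rw [Finset.sum_eq_single i₀]
    · simp
    · intro i _ hne
      have h1 : e i ≠ e i₀ := fun h => hne (he h)
      simp [Polynomial.coeff_X_pow, h1, Ne.symm h1]
    · simp
  rw [hzero] at hcoeff
  simp at hcoeff
  exact hi₀ hcoeff.symm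

open Matrix in
lemma gram_posDef {M p : ℕ} {D : Set ℝ} (hD : MeasurableSet D) (hsub : D ⊆ Set.Ici 0)
    {s : ℝ} (hs : 0 < s) (hIoo : Set.Ioo 0 s ⊆ D) :
    (Matrix.of fun i j : Fin M =>
      ip p D (fun y => y ^ ((i : ℕ) + 1)) (fun y => y ^ ((j : ℕ) + 1))).PosDef := by
  rw [Matrix.posDef_iff_dotProduct_mulVec]
  constructor
  · ext i j
    simp only [Matrix.conjTranspose_apply, Matrix.of_apply, star_trivial]
    exact ip_comm _ _ _ _
  · intro y hy
    have key : dotProduct (star y)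
        ((Matrix.of fun i j : Fin M =>
          ip p D (fun y => y ^ ((i : ℕ) + 1)) (fun y => y ^ ((j : ℕ) + 1))) *ᵥ y)
        = ip p D (fun x => ∑ i, y i * x ^ ((i : ℕ) + 1))
            (fun x => ∑ i, y i * x ^ ((i : ℕ) + 1)) := by
      rw [ip_sum_left hD hsub _ y _ (fun i => IsPolyFun.pow _)
        (IsPolyFun.msum y (fun i => (i : ℕ) + 1))]
      simp only [dotProduct, Matrix.mulVec, star_trivial, Matrix.of_apply]
      refine Finset.sum_congr rfl fun i _ => ?_
      rw [ip_sum_right hD hsub (fun (r : Fin M) (z : ℝ) => z ^ ((r : ℕ) + 1)) y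
        (fun z => z ^ ((i : ℕ) + 1)) (fun r => IsPolyFun.pow _) (IsPolyFun.pow _)]
      exact congrArg (y i * ·) (Finset.sum_congr rfl fun j _ => mul_comm _ _)
    rw [key]
    have heq : (fun x : ℝ => ∑ i, y i * x ^ ((i : ℕ) + 1))
        = fun x => (polyOf y (fun i : Fin M => (i : ℕ) + 1)).eval x := by
      funext x
      rw [polyOf_eval]
    rw [heq]
    exact ip_self_pos hD hsub hs hIoo _
      (polyOf_ne_zero _ _ (fun i j h => Fin.val_injective (by omega)) hy)

open Matrix in
lemma exists_orth {M p : ℕ} {D : Set ℝ} (hD : MeasurableSet D) (hsub : D ⊆ Set.Ici 0)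
    {s : ℝ} (hs : 0 < s) (hIoo : Set.Ioo 0 s ⊆ D) :
    ∃ c : Fin (M + 1) → ℝ, c 0 = 1 ∧ ∀ j : Fin M,
      ip p D (fun x => ∑ i, c i * x ^ (i : ℕ)) (fun y => y ^ ((j : ℕ) + 1)) = 0 := by
  classical
  set G : Matrix (Fin M) (Fin M) ℝ := Matrix.of fun i j =>
    ip p D (fun y => y ^ ((i : ℕ) + 1)) (fun y => y ^ ((j : ℕ) + 1)) with hG
  have hpd : G.PosDef := gram_posDef hD hsub hs hIoo
  set b : Fin M → ℝ := fun j => ip p D (fun y => y ^ (0 : ℕ)) (fun y => y ^ ((j : ℕ) + 1))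
    with hb
  set c' : Fin M → ℝ := -(G⁻¹ *ᵥ b) with hc'
  have hsolve : G *ᵥ c' = -b := by
    rw [hc', Matrix.mulVec_neg, Matrix.mulVec_mulVec, Matrix.mul_nonsing_inv _
      hpd.det_pos.ne'.isUnit, Matrix.one_mulVec]
  refine ⟨Fin.cons 1 c', Fin.cons_zero _ _, fun j => ?_⟩
  rw [ip_sum_left hD hsub (fun (i : Fin (M+1)) (y : ℝ) => y ^ (i : ℕ)) (Fin.cons 1 c') _
    (fun i => IsPolyFun.pow _) (IsPolyFun.pow _)]
  rw [Fin.sum_univ_succ]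
  simp only [Fin.cons_zero, Fin.cons_succ, Fin.val_succ, Fin.val_zero, one_mul]
  have hsum : ∑ i : Fin M, c' i * ip p D (fun y => y ^ ((i : ℕ) + 1))
      (fun y => y ^ ((j : ℕ) + 1)) = (G *ᵥ c') j := by
    have hGsymm : ∀ i j : Fin M, G i j = G j i := fun i j => ip_comm _ _ _ _
    rw [Matrix.mulVec]
    simp only [dotProduct]
    refine Finset.sum_congr rfl fun i _ => ?_
    rw [mul_comm, ← hGsymm i j]
    rfl
  rw [hsum, hsolve]
  simp [hb]

lemma key_identity {M p : ℕ} {D : Set ℝ} (hD : MeasurableSet D) (hsub : D ⊆ Set.Ici 0)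
    (c : Fin (M + 1) → ℝ) (hc0 : c 0 = 1)
    (horth : ∀ j : Fin M,
      ip p D (fun x => ∑ i, c i * x ^ (i : ℕ)) (fun y => y ^ ((j : ℕ) + 1)) = 0) :
    wishartInt' (M + 1) p D
      = ((M : ℝ) + 1) *
          ip p D (fun x => ∑ i, c i * x ^ (i : ℕ)) (fun x => ∑ i, c i * x ^ (i : ℕ)) *
          wishartInt' M (p + 2) D := by
  classical
  set P : ℝ → ℝ := (fun x => ∑ i, c i * x ^ (i : ℕ)) with hP
  set φ : Fin (M + 1) → ℝ → ℝ := Fin.cons P (fun i => fun y => y ^ ((i : ℕ) + 1)) with hφ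
  have hφ0 : φ 0 = P := Fin.cons_zero _ _
  have hφs : ∀ i : Fin M, φ i.succ = fun y => y ^ ((i : ℕ) + 1) := fun i => Fin.cons_succ _ _ _
  have hφpoly : ∀ i, IsPolyFun (φ i) := by
    intro i
    refine Fin.cases ?_ (fun i' => ?_) i
    · rw [hφ0, hP]
      exact IsPolyFun.msum c (fun i => (i : ℕ))
    · rw [hφs i']
      exact IsPolyFun.pow _
  have hdetrow : ∀ x : Fin (M + 1) → ℝ,
      (Matrix.of fun i j => φ i (x j)).det
        = (Matrix.of fun i j : Fin (M + 1) => (x j) ^ (i : ℕ)).det := by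
    intro x
    set V : Matrix (Fin (M + 1)) (Fin (M + 1)) ℝ :=
      Matrix.of fun i j : Fin (M + 1) => (x j) ^ (i : ℕ) with hV
    have hmat : (Matrix.of fun i j => φ i (x j)) = V.updateRow 0 (∑ k, c k • V k) := by
      ext i j
      refine Fin.cases ?_ (fun i' => ?_) i
      · rw [Matrix.of_apply, hφ0, Matrix.updateRow_self]
        simp [hV, hP, Finset.sum_apply]
      · rw [Matrix.of_apply, hφs i', Matrix.updateRow_ne (Fin.succ_ne_zero i')]
        simp [hV, Fin.val_succ]
    rw [hmat, Matrix.det_updateRow_sum, hc0, one_smul]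
  have h1 : wishartInt' (M + 1) p D = (((M + 1).factorial : ℕ) : ℝ) *
      (Matrix.of fun i j => ip p D (φ i) (φ j)).det := by
    rw [← andreief hD hsub φ hφpoly]
    unfold wishartInt' wishartInt
    apply integral_congr_ae
    filter_upwards with x
    rw [hdetrow, vdm_sq]
    rfl
  have h3 : (Matrix.of fun i j => ip p D (φ i) (φ j)).det
      = ip p D P P * (Matrix.of fun i j : Fin M =>
          ip p D (fun y => y ^ ((i : ℕ) + 1)) (fun y => y ^ ((j : ℕ) + 1))).det := by
    rw [Matrix.det_succ_column_zero]
    rw [Finset.sum_eq_single (0 : Fin (M + 1))]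
    · rw [Fin.succAbove_zero]
      have hsub' : (Matrix.of fun i j => ip p D (φ i) (φ j)).submatrix Fin.succ Fin.succ
          = Matrix.of fun i j : Fin M =>
              ip p D (fun y => y ^ ((i : ℕ) + 1)) (fun y => y ^ ((j : ℕ) + 1)) := by
        ext i j
        simp only [Matrix.submatrix_apply, Matrix.of_apply, hφs]
      rw [hsub']
      simp [hφ0]
    · intro i _ hi
      refine Fin.cases (fun h => absurd rfl h) (fun i' _ => ?_) i hi
      have hzero : (Matrix.of fun i j => ip p D (φ i) (φ j)) i'.succ 0 = 0 := by
        simp only [Matrix.of_apply, hφ0, hφs]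
        rw [ip_comm]
        exact horth i'
      rw [hzero]
      ring
    · intro h
      exact absurd (Finset.mem_univ _) h
  rw [h1, h3, wishart_shift_eq_gram M p hD hsub]
  rw [Nat.factorial_succ]
  push_cast
  ring

lemma wishart_zero_dim (q : ℕ) (D : Set ℝ) : wishartInt' 0 q D = 1 := by
  unfold wishartInt' wishartInt
  have huniv : (Set.univ.pi fun _ : Fin 0 => D) = Set.univ := by
    ext x
    simp [Set.mem_pi]
  rw [huniv, Measure.restrict_univ]
  simp [MeasureTheory.integral_const, Measure.pi_univ]
  simp [Measure.real, Measure.pi_univ]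

lemma wishart_nonneg (m p : ℕ) {D : Set ℝ} (hD : MeasurableSet D)
    (hsub : D ⊆ Set.Ici 0) : 0 ≤ wishartInt' m p D := by
  unfold wishartInt' wishartInt
  refine MeasureTheory.setIntegral_nonneg (MeasurableSet.univ_pi fun _ => hD) fun x hx => ?_
  refine mul_nonneg (Finset.prod_nonneg fun i _ => Finset.prod_nonneg fun j _ => sq_nonneg _)
    (Finset.prod_nonneg fun i _ => mul_nonneg (pow_nonneg ?_ _) (Real.exp_pos _).le)
  exact hsub (hx i (Set.mem_univ i))

lemma cons_ne_zero_of_zero_one {M : ℕ} (c : Fin (M + 1) → ℝ) (hc0 : c 0 = 1) : c ≠ 0 := by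
  intro h
  rw [h] at hc0
  simpa using hc0

lemma ip_self_pos_of_c {M p : ℕ} {D : Set ℝ} (hD : MeasurableSet D)
    (hsub : D ⊆ Set.Ici 0) {s : ℝ} (hs : 0 < s) (hIoo : Set.Ioo 0 s ⊆ D)
    (c : Fin (M + 1) → ℝ) (hc0 : c 0 = 1) :
    0 < ip p D (fun x => ∑ i, c i * x ^ (i : ℕ)) (fun x => ∑ i, c i * x ^ (i : ℕ)) := by
  have heq : (fun x : ℝ => ∑ i, c i * x ^ (i : ℕ))
      = fun x => (polyOf c (fun i : Fin (M + 1) => (i : ℕ))).eval x := by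
    funext x
    rw [polyOf_eval]
  rw [heq]
  exact ip_self_pos hD hsub hs hIoo _
    (polyOf_ne_zero _ _ (fun i j h => Fin.val_injective h) (cons_ne_zero_of_zero_one c hc0))

lemma wishart_pos_Ici : ∀ m q : ℕ, 0 < wishartInt' m q (Set.Ici 0) := by
  intro m
  induction m with
  | zero => intro q; rw [wishart_zero_dim]; norm_num
  | succ M IH =>
    intro q
    have hIoo : Set.Ioo (0:ℝ) 1 ⊆ Set.Ici 0 := fun x hx => le_of_lt hx.1
    obtain ⟨c, hc0, horth⟩ := exists_orth (M := M) (p := q) measurableSet_Ici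
      subset_rfl one_pos hIoo
    rw [key_identity measurableSet_Ici subset_rfl c hc0 horth]
    have h1 := ip_self_pos_of_c (p := q) measurableSet_Ici subset_rfl one_pos hIoo c hc0
    have h2 := IH (q + 2)
    positivity

lemma norm_mono {M p : ℕ} {t : ℝ} (ht : 0 < t)
    (ct cinf : Fin (M + 1) → ℝ) (hct0 : ct 0 = 1) (hcinf0 : cinf 0 = 1)
    (horth_t : ∀ j : Fin M, ip p (Set.Icc 0 t)
      (fun x => ∑ i, ct i * x ^ (i : ℕ)) (fun y => y ^ ((j : ℕ) + 1)) = 0) :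
    ip p (Set.Icc 0 t) (fun x => ∑ i, ct i * x ^ (i : ℕ))
        (fun x => ∑ i, ct i * x ^ (i : ℕ))
      ≤ ip p (Set.Ici 0) (fun x => ∑ i, cinf i * x ^ (i : ℕ))
          (fun x => ∑ i, cinf i * x ^ (i : ℕ)) := by
  have hDm : MeasurableSet (Set.Icc (0:ℝ) t) := measurableSet_Icc
  have hDsub : Set.Icc (0:ℝ) t ⊆ Set.Ici 0 := fun x hx => hx.1
  set Pt : ℝ → ℝ := fun x => ∑ i, ct i * x ^ (i : ℕ) with hPt
  set Pinf : ℝ → ℝ := fun x => ∑ i, cinf i * x ^ (i : ℕ) with hPinf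
  set e : Fin M → ℝ := fun i => cinf i.succ - ct i.succ with he
  set d : ℝ → ℝ := fun x => ∑ i : Fin M, e i * x ^ ((i : ℕ) + 1) with hd
  have hPtpoly : IsPolyFun Pt := IsPolyFun.msum ct _
  have hPinfpoly : IsPolyFun Pinf := IsPolyFun.msum cinf _
  have hdpoly : IsPolyFun d := IsPolyFun.msum e _
  have hsplit : ∀ x : ℝ, Pinf x = Pt x + d x := by
    intro x
    rw [hPt, hPinf, hd]
    simp only []
    rw [Fin.sum_univ_succ, Fin.sum_univ_succ (f := fun i : Fin (M+1) => ct i * x ^ (i : ℕ)),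
      hct0, hcinf0, he]
    simp only [Fin.val_zero, pow_zero, one_mul, Fin.val_succ]
    rw [add_assoc, ← Finset.sum_add_distrib]
    congr 1
    exact Finset.sum_congr rfl fun i _ => by ring
  -- orthogonality of Pt to d on Icc
  have hPtd : ip p (Set.Icc 0 t) Pt d = 0 := by
    rw [hd]
    rw [ip_sum_right hDm hDsub (fun (i : Fin M) (y : ℝ) => y ^ ((i : ℕ) + 1)) e Pt
      (fun i => IsPolyFun.pow _) hPtpoly]
    rw [Finset.sum_eq_zero]
    intro i _
    rw [horth_t i, mul_zero]
  -- expansion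
  have hexp : ip p (Set.Icc 0 t) Pinf Pinf
      = ip p (Set.Icc 0 t) Pt Pt + ip p (Set.Icc 0 t) d d := by
    have hptw : ∀ x : ℝ, Pinf x * Pinf x * wgt p x
        = (Pt x * Pt x * wgt p x + d x * d x * wgt p x)
          + (2 * (Pt x * d x * wgt p x)) := by
      intro x
      rw [hsplit x]
      ring
    have hA := intOn_mul_mul_wgt hPtpoly hPtpoly p hDm hDsub
    have hB := intOn_mul_mul_wgt hdpoly hdpoly p hDm hDsub
    have hC := intOn_mul_mul_wgt hPtpoly hdpoly p hDm hDsub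
    calc ip p (Set.Icc 0 t) Pinf Pinf
        = ∫ x in Set.Icc 0 t, ((Pt x * Pt x * wgt p x + d x * d x * wgt p x)
            + (2 * (Pt x * d x * wgt p x))) := by
          unfold ip
          apply integral_congr_ae
          filter_upwards with x
          exact hptw x
      _ = ((∫ x in Set.Icc 0 t, Pt x * Pt x * wgt p x)
            + ∫ x in Set.Icc 0 t, d x * d x * wgt p x)
            + 2 * ∫ x in Set.Icc 0 t, Pt x * d x * wgt p x := by
          rw [integral_add (show IntegrableOn
              (fun x => Pt x * Pt x * wgt p x + d x * d x * wgt p x)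
              (Set.Icc 0 t) volume from hA.add hB)
            (show IntegrableOn (fun x => 2 * (Pt x * d x * wgt p x))
              (Set.Icc 0 t) volume from hC.const_mul 2),
            integral_add hA hB, MeasureTheory.integral_const_mul]
      _ = ip p (Set.Icc 0 t) Pt Pt + ip p (Set.Icc 0 t) d d := by
          have h0 : ∫ x in Set.Icc 0 t, Pt x * d x * wgt p x = 0 := hPtd
          rw [h0]
          unfold ip
          ring
  have hmono : ip p (Set.Icc 0 t) Pinf Pinf ≤ ip p (Set.Ici 0) Pinf Pinf := by
    unfold ip
    refine MeasureTheory.setIntegral_mono_set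
      (intOn_mul_mul_wgt hPinfpoly hPinfpoly p measurableSet_Ici subset_rfl) ?_
      (HasSubset.Subset.eventuallyLE hDsub)
    refine ae_restrict_of_forall_mem measurableSet_Ici fun x hx => ?_
    have hx0 : (0:ℝ) ≤ x := hx
    have h1 : 0 ≤ Pinf x * Pinf x := mul_self_nonneg _
    unfold wgt
    positivity
  have hdd : 0 ≤ ip p (Set.Icc 0 t) d d := ip_self_nonneg hDm hDsub d
  linarith

lemma wishart_Icc_zero (M p : ℕ) : wishartInt' (M + 1) p (Set.Icc 0 0) = 0 := by
  unfold wishartInt' wishartInt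
  have hnull : (Measure.pi fun _ : Fin (M + 1) => (volume : Measure ℝ))
      (Set.univ.pi fun _ => Set.Icc (0:ℝ) 0) = 0 := by
    rw [Measure.pi_pi]
    simp [Real.volume_Icc]
  rw [Measure.restrict_eq_zero.mpr hnull, integral_zero_measure]

theorem stmt_16' (n k : ℕ) (hn : 2 ≤ n) (hk : k ≤ n - 2) (t : ℝ) (ht : 0 ≤ t) :
    wishartInt' (n - k) (2 * k) (Set.Icc 0 t) / wishartInt' (n - k) (2 * k) (Set.Ici 0)
      ≤ wishartInt' (n - k - 1) (2 * k + 2) (Set.Icc 0 t)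
          / wishartInt' (n - k - 1) (2 * k + 2) (Set.Ici 0) := by
  obtain ⟨M, hm1, hm2⟩ : ∃ M : ℕ, n - k = M + 1 ∧ n - k - 1 = M :=
    ⟨n - k - 1, by omega, rfl⟩
  rw [hm2, hm1]
  set p := 2 * k with hp
  have hIoo1 : Set.Ioo (0:ℝ) 1 ⊆ Set.Ici 0 := fun x hx => le_of_lt hx.1
  rcases eq_or_lt_of_le ht with h0 | h0
  · rw [← h0, wishart_Icc_zero M p, zero_div]
    exact div_nonneg (wishart_nonneg M (p + 2) measurableSet_Icc
        (fun x hx => hx.1))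
      (wishart_nonneg M (p + 2) measurableSet_Ici subset_rfl)
  · have hIccm : MeasurableSet (Set.Icc (0:ℝ) t) := measurableSet_Icc
    have hsubt : Set.Icc (0:ℝ) t ⊆ Set.Ici 0 := fun x hx => hx.1
    have hIoot : Set.Ioo (0:ℝ) t ⊆ Set.Icc 0 t := Set.Ioo_subset_Icc_self
    obtain ⟨ct, hct0, hortht⟩ := exists_orth (M := M) (p := p) hIccm hsubt h0 hIoot
    obtain ⟨ci, hci0, horthi⟩ := exists_orth (M := M) (p := p) measurableSet_Ici
      subset_rfl one_pos hIoo1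
    have hNt := key_identity hIccm hsubt ct hct0 hortht
    have hNi := key_identity measurableSet_Ici subset_rfl ci hci0 horthi
    have hmono := norm_mono (p := p) h0 ct ci hct0 hci0 hortht
    have hDt0 : 0 ≤ wishartInt' M (p + 2) (Set.Icc 0 t) :=
      wishart_nonneg M (p + 2) hIccm hsubt
    have hDi : 0 < wishartInt' M (p + 2) (Set.Ici 0) := wishart_pos_Ici M (p + 2)
    have hNipos : 0 < wishartInt' (M + 1) p (Set.Ici 0) := wishart_pos_Ici (M + 1) p
    rw [div_le_div_iff₀ hNipos hDi, hNt, hNi]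
    have hfact : 0 ≤ (ip p (Set.Ici 0) (fun x => ∑ i, ci i * x ^ (i : ℕ))
          (fun x => ∑ i, ci i * x ^ (i : ℕ))
        - ip p (Set.Icc 0 t) (fun x => ∑ i, ct i * x ^ (i : ℕ))
          (fun x => ∑ i, ct i * x ^ (i : ℕ)))
        * (((M : ℝ) + 1) * (wishartInt' M (p + 2) (Set.Icc 0 t)
            * wishartInt' M (p + 2) (Set.Ici 0))) := by
      refine mul_nonneg (sub_nonneg.mpr hmono) ?_
      positivity
    nlinarith [hfact]

theorem stmt_16 (n k : ℕ) (hn : 2 ≤ n) (hk : k ≤ n - 2) (t : ℝ) (ht : 0 ≤ t) :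
    wishartInt (n - k) (2 * k) (Set.Icc 0 t) / wishartInt (n - k) (2 * k) (Set.Ici 0)
      ≤ wishartInt (n - k - 1) (2 * k + 2) (Set.Icc 0 t)
          / wishartInt (n - k - 1) (2 * k + 2) (Set.Ici 0) := by
  exact stmt_16' n k hn hk t ht
end

section
/- For integers n ≥ 2, n_1 ≥ n, n_2 ≥ n, and every t ∈ [0,1], the following inequality between normalized integrals holds: [∫_{[0,t]^{n-1}} ∏_{1≤i<j≤n-1} (x_i − x_j)² · ∏_{i=1}^{n-1} x_i^{n_1−n+2} (1−x_i)^{n_2−n} dx] / [∫_{[0,1]^{n-1}} ∏_{1≤i<j≤n-1} (x_i − x_j)² · ∏_{i=1}^{n-1} x_i^{n_1−n+2} (1−x_i)^{n_2−n} dx] ≥ [∫_{[0,t]^{n}} ∏_{1≤i<j≤n} (x_i − x_j)² · ∏_{i=1}^{n} x_i^{n_1−n} (1−x_i)^{n_2−n} dx] / [∫_{[0,1]^{n}} ∏_{1≤i<j≤n} (x_i − x_j)² · ∏_{i=1}^{n} x_i^{n_1−n} (1−x_i)^{n_2−n} dx]. -/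
open MeasureTheory

/-- The (unnormalized) Jacobi-type integral: `m` eigenvalues in `D`, squared Vandermonde,
weight `x^a (1-x)^b`. -/
noncomputable def jacobiInt (m a b : ℕ) (D : Set ℝ) : ℝ :=
  ∫ x in Set.univ.pi (fun _ : Fin m => D),
    ((∏ i : Fin m, ∏ j ∈ Finset.Ioi i, (x i - x j) ^ 2) *
      ∏ i : Fin m, ((x i) ^ a * (1 - x i) ^ b))
    ∂(Measure.pi fun _ : Fin m => volume)

open Matrix

noncomputable def mom (a b : ℕ) (t : ℝ) (k : ℕ) : ℝ :=
  ∫ x in Set.Icc (0:ℝ) t, x ^ (k + a) * (1 - x) ^ b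

noncomputable def mmat (m a b : ℕ) (t : ℝ) : Matrix (Fin m) (Fin m) ℝ :=
  Matrix.of fun i j : Fin m => mom a b t ((i : ℕ) + (j : ℕ))

lemma restrict_pi_univ_pi {m : ℕ} {D : Set ℝ} :
    (Measure.pi fun _ : Fin m => (volume : Measure ℝ)).restrict (Set.univ.pi fun _ => D)
      = Measure.pi fun _ : Fin m => (volume : Measure ℝ).restrict D := by
  refine (Measure.pi_eq fun s hs => ?_).symm
  rw [Measure.restrict_apply (MeasurableSet.univ_pi hs), ← Set.pi_inter_distrib,
    Measure.pi_pi]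
  simp [Measure.restrict_apply (hs _)]

lemma integral_pi_prod {m : ℕ} (μ : Measure ℝ) [IsFiniteMeasure μ] (f : Fin m → ℝ → ℝ) :
    (∫ x, ∏ i, f i (x i) ∂(Measure.pi fun _ : Fin m => μ)) = ∏ i, ∫ x, f i x ∂μ := by
  letI : MeasureSpace ℝ := ⟨μ⟩
  exact MeasureTheory.integral_fintype_prod_eq_prod (𝕜 := ℝ) (ι := Fin m) (E := fun _ : Fin m => ℝ) f

lemma integrable_pi_prod {m : ℕ} (μ : Measure ℝ) [IsFiniteMeasure μ] (f : Fin m → ℝ → ℝ)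
    (hf : ∀ i, Integrable (f i) μ) :
    Integrable (fun x : Fin m → ℝ => ∏ i, f i (x i)) (Measure.pi fun _ : Fin m => μ) := by
  letI : MeasureSpace ℝ := ⟨μ⟩
  exact MeasureTheory.Integrable.fintype_prod_dep (E := fun _ : Fin m => ℝ) hf





-- pointwise expansion
lemma vandermonde_sq_expand {m : ℕ} (a b : ℕ) (x : Fin m → ℝ) :
    ((∏ i : Fin m, ∏ j ∈ Finset.Ioi i, (x i - x j) ^ 2) *
      ∏ i : Fin m, ((x i) ^ a * (1 - x i) ^ b))
    = ∑ σ : Equiv.Perm (Fin m), ∑ τ : Equiv.Perm (Fin m),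
        ((Equiv.Perm.sign σ : ℝ) * (Equiv.Perm.sign τ : ℝ)) *
          ∏ i : Fin m, ((x i) ^ ((σ i : ℕ) + (τ i : ℕ)) * ((x i) ^ a * (1 - x i) ^ b)) := by
  have h1 : (∏ i : Fin m, ∏ j ∈ Finset.Ioi i, (x i - x j) ^ 2)
      = (∏ i : Fin m, ∏ j ∈ Finset.Ioi i, (x j - x i)) ^ 2 := by
    rw [← Finset.prod_pow]
    refine Finset.prod_congr rfl fun i _ => ?_
    rw [← Finset.prod_pow]
    exact Finset.prod_congr rfl fun j _ => by ring
  have h2 : (∏ i : Fin m, ∏ j ∈ Finset.Ioi i, (x j - x i))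
      = ∑ σ : Equiv.Perm (Fin m), (Equiv.Perm.sign σ : ℝ) * ∏ i : Fin m, (x i) ^ ((σ i : ℕ)) := by
    rw [← Matrix.det_vandermonde, ← Matrix.det_transpose, Matrix.det_apply']
    refine Finset.sum_congr rfl fun σ _ => ?_
    congr 1
  rw [h1, sq, h2, Finset.sum_mul_sum, Finset.sum_mul]
  refine Finset.sum_congr rfl fun σ _ => ?_
  rw [Finset.sum_mul]
  refine Finset.sum_congr rfl fun τ _ => ?_
  have h3 : ∏ i : Fin m, (x i ^ ((σ i:ℕ) + (τ i:ℕ)) * (x i ^ a * (1 - x i) ^ b))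
      = ((∏ i, x i ^ (σ i:ℕ)) * (∏ i, x i ^ (τ i : ℕ))) * ∏ i, (x i ^ a * (1-x i)^b) := by
    rw [← Finset.prod_mul_distrib, ← Finset.prod_mul_distrib]
    exact Finset.prod_congr rfl fun i _ => by rw [pow_add]
  rw [h3]; ring

lemma perm_sum_det {m : ℕ} (g : ℕ → ℝ) :
    (∑ σ : Equiv.Perm (Fin m), ∑ τ : Equiv.Perm (Fin m),
      ((Equiv.Perm.sign σ : ℝ) * (Equiv.Perm.sign τ : ℝ)) * ∏ i : Fin m, g ((σ i : ℕ) + (τ i : ℕ)))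
    = (m.factorial : ℝ) * (Matrix.of fun i j : Fin m => g ((i : ℕ) + (j : ℕ))).det := by
  have key : ∀ τ : Equiv.Perm (Fin m),
      (∑ σ : Equiv.Perm (Fin m),
        ((Equiv.Perm.sign σ : ℝ) * (Equiv.Perm.sign τ : ℝ)) * ∏ i : Fin m, g ((σ i : ℕ) + (τ i : ℕ)))
      = (Matrix.of fun i j : Fin m => g ((i : ℕ) + (j : ℕ))).det := by
    intro τ
    rw [Matrix.det_apply']
    rw [← Equiv.sum_comp (Equiv.mulRight τ)
      (fun σ => ((Equiv.Perm.sign σ : ℝ) * (Equiv.Perm.sign τ : ℝ)) * ∏ i : Fin m, g ((σ i : ℕ) + (τ i : ℕ)))]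
    refine Finset.sum_congr rfl fun π _ => ?_
    have hs : ((Equiv.Perm.sign (π * τ) : ℝ) * (Equiv.Perm.sign τ : ℝ)) = (Equiv.Perm.sign π : ℝ) := by
      rw [Equiv.Perm.sign_mul]
      push_cast
      rcases Int.units_eq_one_or (Equiv.Perm.sign τ) with h | h <;> rw [h] <;> norm_num
    have hp : (∏ i : Fin m, g (((π * τ) i : ℕ) + (τ i : ℕ)))
        = ∏ i : Fin m, g ((π i : ℕ) + (i : ℕ)) := by
      rw [← Equiv.prod_comp τ (fun i => g ((π i : ℕ) + (i : ℕ)))]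
      simp [Equiv.Perm.mul_apply]
    simp only [Equiv.coe_mulRight] at *
    rw [hs, hp]
    simp [Matrix.of_apply]
  rw [Finset.sum_comm, Finset.sum_congr rfl fun τ _ => key τ, Finset.sum_const, Finset.card_univ,
    Fintype.card_perm, Fintype.card_fin, nsmul_eq_mul]

lemma vandermonde_sq_expand' {m : ℕ} (a b : ℕ) (x : Fin m → ℝ) :
    ((∏ i : Fin m, ∏ j ∈ Finset.Ioi i, (x i - x j) ^ 2) *
      ∏ i : Fin m, ((x i) ^ a * (1 - x i) ^ b))
    = ∑ p : Equiv.Perm (Fin m) × Equiv.Perm (Fin m),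
        ((Equiv.Perm.sign p.1 : ℝ) * (Equiv.Perm.sign p.2 : ℝ)) *
          ∏ i : Fin m, ((x i) ^ ((p.1 i : ℕ) + (p.2 i : ℕ)) * ((x i) ^ a * (1 - x i) ^ b)) := by
  rw [vandermonde_sq_expand a b x]
  exact (Fintype.sum_prod_type (f := fun p : Equiv.Perm (Fin m) × Equiv.Perm (Fin m) =>
    ((Equiv.Perm.sign p.1 : ℝ) * (Equiv.Perm.sign p.2 : ℝ)) *
      ∏ i : Fin m, ((x i) ^ ((p.1 i : ℕ) + (p.2 i : ℕ)) * ((x i) ^ a * (1 - x i) ^ b)))).symm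

set_option maxHeartbeats 1000000 in
lemma jacobiInt_Icc (m a b : ℕ) (t : ℝ) :
    jacobiInt m a b (Set.Icc 0 t) = (m.factorial : ℝ) * (mmat m a b t).det := by
  classical
  set μ := (volume : Measure ℝ).restrict (Set.Icc (0:ℝ) t) with hμ
  haveI : IsFiniteMeasure μ := ⟨by
    rw [hμ, Measure.restrict_apply_univ, Real.volume_Icc]; exact ENNReal.ofReal_lt_top⟩
  have hcont : ∀ k : ℕ, Continuous (fun s : ℝ => s ^ k * (s ^ a * (1 - s) ^ b)) := by
    intro k; continuity
  have hint : ∀ k : ℕ, Integrable (fun s : ℝ => s ^ k * (s ^ a * (1 - s) ^ b)) μ := by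
    intro k; exact (hcont k).integrableOn_Icc
  have hmom : ∀ k : ℕ, (∫ s, s ^ k * (s ^ a * (1 - s) ^ b) ∂μ) = mom a b t k := by
    intro k
    rw [hμ, mom]
    refine setIntegral_congr_fun measurableSet_Icc fun s _ => ?_
    rw [pow_add]; ring
  set F : Equiv.Perm (Fin m) × Equiv.Perm (Fin m) → (Fin m → ℝ) → ℝ :=
    fun p x => ((Equiv.Perm.sign p.1 : ℝ) * (Equiv.Perm.sign p.2 : ℝ)) *
      ∏ i : Fin m, ((x i) ^ ((p.1 i : ℕ) + (p.2 i : ℕ)) * ((x i) ^ a * (1 - x i) ^ b)) with hF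
  have hFint : ∀ p ∈ (Finset.univ : Finset (Equiv.Perm (Fin m) × Equiv.Perm (Fin m))),
      Integrable (F p) (Measure.pi fun _ : Fin m => μ) := by
    intro p _
    exact (integrable_pi_prod μ
      (fun i s => s ^ ((p.1 i : ℕ) + (p.2 i : ℕ)) * (s ^ a * (1 - s) ^ b))
      (fun i => hint _)).const_mul _
  have hsum := integral_finset_sum (μ := Measure.pi fun _ : Fin m => μ) Finset.univ hFint
  have hterm : ∀ p : Equiv.Perm (Fin m) × Equiv.Perm (Fin m),
      (∫ x : Fin m → ℝ, F p x ∂(Measure.pi fun _ : Fin m => μ))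
      = ((Equiv.Perm.sign p.1 : ℝ) * (Equiv.Perm.sign p.2 : ℝ)) *
          ∏ i : Fin m, mom a b t ((p.1 i : ℕ) + (p.2 i : ℕ)) := by
    intro p
    rw [hF]
    simp only []
    rw [MeasureTheory.integral_const_mul, integral_pi_prod μ
      (fun i s => s ^ ((p.1 i : ℕ) + (p.2 i : ℕ)) * (s ^ a * (1 - s) ^ b))]
    congr 1
    exact Finset.prod_congr rfl fun i _ => hmom _
  have hmain : jacobiInt m a b (Set.Icc 0 t)
      = ∫ x : Fin m → ℝ, (∑ p : Equiv.Perm (Fin m) × Equiv.Perm (Fin m), F p x)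
          ∂(Measure.pi fun _ : Fin m => μ) := by
    rw [jacobiInt, restrict_pi_univ_pi, ← hμ]
    exact integral_congr_ae (Filter.EventuallyEq.of_eq (funext fun x =>
      vandermonde_sq_expand' a b x))
  rw [hmain, hsum, Finset.sum_congr rfl fun p _ => hterm p, Fintype.sum_prod_type,
    perm_sum_det, mmat]

lemma quadform (m a b : ℕ) (t : ℝ) (x : Fin m → ℝ) :
    dotProduct x ((mmat m a b t) *ᵥ x)
    = ∫ s in Set.Icc (0:ℝ) t, ((∑ i : Fin m, x i * s ^ (i:ℕ))^2 * (s ^ a * (1-s)^b)) := by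
  classical
  set μ := (volume : Measure ℝ).restrict (Set.Icc (0:ℝ) t) with hμ
  have hint : ∀ p : Fin m × Fin m, Integrable
      (fun s : ℝ => (x p.1 * x p.2) * (s ^ ((p.1:ℕ)+(p.2:ℕ)+a) * (1-s)^b)) μ :=
    fun p => Continuous.integrableOn_Icc (by continuity)
  have h1 : dotProduct x ((mmat m a b t) *ᵥ x)
      = ∑ p : Fin m × Fin m,
          ∫ s, (x p.1 * x p.2) * (s ^ ((p.1:ℕ)+(p.2:ℕ)+a) * (1-s)^b) ∂μ := by
    rw [dotProduct, Fintype.sum_prod_type]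
    refine Finset.sum_congr rfl fun i _ => ?_
    rw [Matrix.mulVec, dotProduct, Finset.mul_sum]
    refine Finset.sum_congr rfl fun j _ => ?_
    have : x i * (mmat m a b t i j * x j)
        = (x i * x j) * mom a b t ((i:ℕ)+(j:ℕ)) := by
      rw [mmat, Matrix.of_apply]; ring
    rw [this, mom, ← MeasureTheory.integral_const_mul]
  have h2 : ∀ s : ℝ,
      (∑ p : Fin m × Fin m, (x p.1 * x p.2) * (s ^ ((p.1:ℕ)+(p.2:ℕ)+a) * (1-s)^b))
      = (∑ i : Fin m, x i * s^(i:ℕ))^2 * (s^a*(1-s)^b) := by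
    intro s
    rw [sq, Finset.sum_mul_sum]
    rw [Fintype.sum_prod_type]
    rw [Finset.sum_mul]
    refine Finset.sum_congr rfl fun i _ => ?_
    rw [Finset.sum_mul]
    refine Finset.sum_congr rfl fun j _ => ?_
    rw [pow_add, pow_add]; ring
  rw [h1, ← integral_finset_sum Finset.univ (fun p _ => hint p)]
  exact integral_congr_ae (Filter.EventuallyEq.of_eq (funext h2))

lemma mmat_symm (m a b : ℕ) (t : ℝ) : (mmat m a b t).IsHermitian := by
  show _ = _
  ext i j
  simp [mmat, Matrix.conjTranspose_apply, add_comm]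

lemma mmat_posdef (m a b : ℕ) {t : ℝ} (h0 : 0 < t) (h1 : t ≤ 1) :
    (mmat m a b t).PosDef := by
  classical
  refine Matrix.posDef_iff_dotProduct_mulVec.2 ⟨mmat_symm m a b t, fun x hx => ?_⟩
  have hsx : star x = x := by
    funext i; simp
  rw [hsx, quadform]
  set f : ℝ → ℝ := fun s => (∑ i : Fin m, x i * s ^ (i:ℕ))^2 * (s ^ a * (1-s)^b) with hf
  have hnn : 0 ≤ᶠ[ae (volume.restrict (Set.Icc (0:ℝ) t))] f := by
    refine (ae_restrict_mem measurableSet_Icc).mono fun s hs => ?_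
    have h0s : (0:ℝ) ≤ s := hs.1
    have h1s : s ≤ 1 := le_trans hs.2 h1
    have : (0:ℝ) ≤ 1 - s := by linarith
    positivity
  have hfi : IntegrableOn f (Set.Icc (0:ℝ) t) volume :=
    Continuous.integrableOn_Icc (by fun_prop)
  rw [setIntegral_pos_iff_support_of_nonneg_ae hnn hfi]
  -- the polynomial
  set p : Polynomial ℝ := ∑ i : Fin m, Polynomial.C (x i) * Polynomial.X ^ (i:ℕ) with hp
  have hpeval : ∀ s : ℝ, p.eval s = ∑ i : Fin m, x i * s ^ (i:ℕ) := by
    intro s; rw [hp, Polynomial.eval_finset_sum]; simp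
  have hpne : p ≠ 0 := by
    intro h
    apply hx
    funext i
    have := congrArg (fun q => Polynomial.coeff q (i:ℕ)) h
    simp only [hp, Polynomial.finset_sum_coeff, Polynomial.coeff_C_mul,
      Polynomial.coeff_X_pow, Polynomial.coeff_zero] at this
    rw [Finset.sum_eq_single i (fun j _ hj => by
        simp [Fin.val_eq_val, hj, (by simpa [Fin.val_eq_val] using (Ne.symm hj) : ¬ ((i:ℕ) = (j:ℕ)))])
      (by simp)] at this
    simpa using this
  have hroots : {s : ℝ | p.IsRoot s}.Finite := Polynomial.finite_setOf_isRoot hpne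
  have hsub : Set.Ioo (0:ℝ) t \ {s : ℝ | p.IsRoot s} ⊆ Function.support f ∩ Set.Icc 0 t := by
    rintro s ⟨hs, hns⟩
    refine ⟨?_, ⟨le_of_lt hs.1, le_of_lt hs.2⟩⟩
    have h0s : (0:ℝ) < s := hs.1
    have h1s : s < 1 := lt_of_lt_of_le hs.2 h1
    have hpz : p.eval s ≠ 0 := hns
    rw [hpeval] at hpz
    have : (0:ℝ) < 1 - s := by linarith
    simp only [hf, Function.mem_support]
    positivity
  calc (0:ENNReal) < ENNReal.ofReal t := by simpa using h0
    _ = volume (Set.Ioo (0:ℝ) t \ {s : ℝ | p.IsRoot s}) := by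
        rw [measure_diff_null (hroots.measure_zero _), Real.volume_Ioo, sub_zero]
    _ ≤ volume (Function.support f ∩ Set.Icc 0 t) := measure_mono hsub

lemma quad_mono (m a b : ℕ) {t : ℝ} (h1 : t ≤ 1) (x : Fin m → ℝ) :
    dotProduct x ((mmat m a b t) *ᵥ x)
      ≤ dotProduct x ((mmat m a b 1) *ᵥ x) := by
  rw [quadform, quadform]
  refine setIntegral_mono_set (Continuous.integrableOn_Icc (by fun_prop)) ?_ ?_
  · refine (ae_restrict_mem measurableSet_Icc).mono fun s hs => ?_
    have h0s : (0:ℝ) ≤ s := hs.1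
    have h1s : s ≤ 1 := hs.2
    have : (0:ℝ) ≤ 1 - s := by linarith
    positivity
  · exact Filter.Eventually.of_forall fun s hs => Set.Icc_subset_Icc_right h1 hs

lemma adj00 {m : ℕ} (A : Matrix (Fin (m+1)) (Fin (m+1)) ℝ) :
    A.adjugate 0 0 = (A.submatrix Fin.succ Fin.succ).det := by
  rw [Matrix.adjugate_apply, Matrix.det_succ_row_zero]
  rw [Finset.sum_eq_single 0]
  · have hsub : (A.updateRow 0 (Pi.single 0 1)).submatrix Fin.succ ((0:Fin (m+1)).succAbove)
        = A.submatrix Fin.succ Fin.succ := by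
      ext i j
      simp [Matrix.submatrix_apply, Fin.zero_succAbove,
        Matrix.updateRow_ne (Fin.succ_ne_zero i)]
    rw [hsub]
    simp
  · intro j _ hj
    simp [Matrix.updateRow_self, Pi.single_eq_of_ne hj]
  · simp

lemma inv00 {m : ℕ} (A : Matrix (Fin (m+1)) (Fin (m+1)) ℝ) :
    A⁻¹ 0 0 = (A.submatrix Fin.succ Fin.succ).det / A.det := by
  rw [Matrix.inv_def, Matrix.smul_apply, adj00, smul_eq_mul, Ring.inverse_eq_inv]
  rw [div_eq_inv_mul]

lemma conjT_eq_transpose {m : ℕ} (A : Matrix (Fin m) (Fin m) ℝ) : Aᴴ = Aᵀ := by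
  ext i j; simp [Matrix.conjTranspose_apply]

lemma inv_quad_cmp {m : ℕ} (A B : Matrix (Fin (m+1)) (Fin (m+1)) ℝ)
    (hA : A.PosDef) (hB : B.PosDef)
    (hle : ∀ x : Fin (m+1) → ℝ, dotProduct x (A *ᵥ x) ≤ dotProduct x (B *ᵥ x)) :
    B⁻¹ 0 0 ≤ A⁻¹ 0 0 := by
  classical
  have hAdet : IsUnit A.det := isUnit_iff_ne_zero.2 (ne_of_gt hA.det_pos)
  have hBdet : IsUnit B.det := isUnit_iff_ne_zero.2 (ne_of_gt hB.det_pos)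
  set e : Fin (m+1) → ℝ := Pi.single 0 1 with he
  set p : Fin (m+1) → ℝ := A⁻¹ *ᵥ e with hp
  set q : Fin (m+1) → ℝ := B⁻¹ *ᵥ e with hq
  have hAp : A *ᵥ p = e := by
    rw [hp, Matrix.mulVec_mulVec, Matrix.mul_nonsing_inv _ hAdet, Matrix.one_mulVec]
  have hBq : B *ᵥ q = e := by
    rw [hq, Matrix.mulVec_mulVec, Matrix.mul_nonsing_inv _ hBdet, Matrix.one_mulVec]
  have hsymm : ∀ y z : Fin (m+1) → ℝ, dotProduct y (A *ᵥ z)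
      = dotProduct z (A *ᵥ y) := by
    intro y z
    rw [Matrix.dotProduct_mulVec, ← Matrix.mulVec_transpose, dotProduct_comm]
    congr 2
    rw [← conjT_eq_transpose, hA.1]
  have hpos : 0 ≤ dotProduct (p - q) (A *ᵥ (p - q)) := by
    have h := hA.posSemidef.dotProduct_mulVec_nonneg (p - q)
    have hst : star (p - q) = p - q := by funext i; simp
    rwa [hst] at h
  have hqAq : dotProduct q (A *ᵥ q) ≤ dotProduct q e := by
    have := hle q
    rwa [hBq] at this
  have hexp : dotProduct (p - q) (A *ᵥ (p - q))
      = dotProduct p e - 2 * dotProduct q e + dotProduct q (A *ᵥ q) := by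
    rw [Matrix.mulVec_sub, dotProduct_sub, sub_dotProduct, sub_dotProduct,
      hAp]
    have h1 : dotProduct p (A *ᵥ q) = dotProduct q e := by
      rw [hsymm p q, hAp]
    have h2 : dotProduct q e = dotProduct e q := dotProduct_comm _ _
    rw [h1]
    ring
  have hfin : dotProduct q e ≤ dotProduct p e := by nlinarith [hpos, hexp, hqAq]
  have hpe : dotProduct p e = A⁻¹ 0 0 := by
    rw [hp, he]
    simp [Matrix.mulVec_single, dotProduct_single]
  have hqe : dotProduct q e = B⁻¹ 0 0 := by
    rw [hq, he]
    simp [Matrix.mulVec_single, dotProduct_single]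
  rwa [hpe, hqe] at hfin

lemma det_cmp {m : ℕ} (A B : Matrix (Fin (m+1)) (Fin (m+1)) ℝ)
    (hA : A.PosDef) (hB : B.PosDef)
    (hle : ∀ x : Fin (m+1) → ℝ, dotProduct x (A *ᵥ x) ≤ dotProduct x (B *ᵥ x)) :
    A.det * (B.submatrix Fin.succ Fin.succ).det ≤ B.det * (A.submatrix Fin.succ Fin.succ).det := by
  have h := inv_quad_cmp A B hA hB hle
  rw [inv00, inv00] at h
  rw [div_le_div_iff₀ hB.det_pos hA.det_pos] at h
  linarith

lemma jacobi_nonneg (m a b : ℕ) {t : ℝ} (ht1 : t ≤ 1) : 0 ≤ jacobiInt m a b (Set.Icc 0 t) := by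
  refine setIntegral_nonneg (MeasurableSet.univ_pi fun _ => measurableSet_Icc) fun x hx => ?_
  have hmem : ∀ i, x i ∈ Set.Icc (0:ℝ) t := fun i => Set.mem_univ_pi.mp hx i
  have h1 : ∀ i, (0:ℝ) ≤ x i := fun i => (hmem i).1
  have h2 : ∀ i, x i ≤ 1 := fun i => le_trans (hmem i).2 ht1
  apply mul_nonneg
  · exact Finset.prod_nonneg fun i _ => Finset.prod_nonneg fun j _ => sq_nonneg _
  · exact Finset.prod_nonneg fun i _ => mul_nonneg (pow_nonneg (h1 i) a)
      (pow_nonneg (by linarith [h2 i]) b)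

lemma mmat_zero (m a b : ℕ) : mmat m a b 0 = 0 := by
  ext i j
  show mom a b 0 _ = 0
  rw [mom, Set.Icc_self,
    show (volume : Measure ℝ).restrict {(0:ℝ)} = 0 from
      Measure.restrict_eq_zero.mpr (Real.volume_singleton), integral_zero_measure]

lemma main_aux (k a b : ℕ) (t : ℝ) (ht : t ∈ Set.Icc (0:ℝ) 1) :
    jacobiInt (k+1) a b (Set.Icc 0 t) / jacobiInt (k+1) a b (Set.Icc 0 1)
      ≤ jacobiInt k (a+2) b (Set.Icc 0 t) / jacobiInt k (a+2) b (Set.Icc 0 1) := by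
  obtain ⟨ht0, ht1⟩ := ht
  have hsub : ∀ s : ℝ, (mmat (k+1) a b s).submatrix Fin.succ Fin.succ = mmat k (a+2) b s := by
    intro s
    ext i j
    show mom a b s (((i:ℕ)+1) + ((j:ℕ)+1)) = mom (a+2) b s ((i : ℕ) + (j : ℕ))
    rw [mom, mom, show ((i:ℕ)+1) + ((j:ℕ)+1) + a = ((i:ℕ) + (j:ℕ)) + (a+2) by omega]
  have h1 : (mmat (k+1) a b 1).PosDef := mmat_posdef _ _ _ one_pos le_rfl
  have h1' : (mmat k (a+2) b 1).PosDef := mmat_posdef _ _ _ one_pos le_rfl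
  have hd1 : 0 < jacobiInt (k+1) a b (Set.Icc 0 1) := by
    rw [jacobiInt_Icc]
    exact mul_pos (by positivity) h1.det_pos
  have hd2 : 0 < jacobiInt k (a+2) b (Set.Icc 0 1) := by
    rw [jacobiInt_Icc]
    exact mul_pos (by positivity) h1'.det_pos
  rcases eq_or_lt_of_le ht0 with h | h
  · have hLHS : jacobiInt (k+1) a b (Set.Icc 0 t) = 0 := by
      rw [← h, jacobiInt_Icc, mmat_zero, Matrix.det_zero, mul_zero]
    rw [hLHS, zero_div]
    exact div_nonneg (jacobi_nonneg _ _ _ ht1) (le_of_lt hd2)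
  · have hPt : (mmat (k+1) a b t).PosDef := mmat_posdef _ _ _ h ht1
    have hPt' : (mmat k (a+2) b t).PosDef := mmat_posdef _ _ _ h ht1
    have key := det_cmp (mmat (k+1) a b t) (mmat (k+1) a b 1) hPt h1
      (fun x => quad_mono _ _ _ ht1 x)
    rw [hsub t, hsub 1] at key
    rw [jacobiInt_Icc, jacobiInt_Icc, jacobiInt_Icc, jacobiInt_Icc]
    rw [mul_div_mul_left _ _ (by positivity : ((k+1).factorial : ℝ) ≠ 0),
      mul_div_mul_left _ _ (by positivity : (k.factorial : ℝ) ≠ 0)]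
    rw [div_le_div_iff₀ h1.det_pos h1'.det_pos]
    nlinarith [key]

theorem stmt_17 (n n₁ n₂ : ℕ) (hn : 2 ≤ n) (h₁ : n ≤ n₁) (h₂ : n ≤ n₂)
    (t : ℝ) (ht : t ∈ Set.Icc (0 : ℝ) 1) :
    jacobiInt n (n₁ - n) (n₂ - n) (Set.Icc 0 t)
        / jacobiInt n (n₁ - n) (n₂ - n) (Set.Icc 0 1)
      ≤ jacobiInt (n - 1) (n₁ - n + 2) (n₂ - n) (Set.Icc 0 t)
          / jacobiInt (n - 1) (n₁ - n + 2) (n₂ - n) (Set.Icc 0 1) := by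
  obtain ⟨k, rfl⟩ : ∃ k, n = k + 1 := ⟨n - 1, by omega⟩
  have hk : k + 1 - 1 = k := by omega
  rw [hk]
  exact main_aux k (n₁ - (k+1)) (n₂ - (k+1)) t ht
end

section
/- Fix an integer n ≥ 2 and 0 < q < 1. Let W = {h ∈ ℕ^{n-1} : h_1 < h_2 < ⋯ < h_{n-1}} and Δ(h) = ∏_{1≤i<j≤n-1}(h_j − h_i). Define Z_2 = Σ_{h ∈ W} Δ(h)² ∏_{i=1}^{n-1} h_i² q^{h_i} and Z_3 = Σ_{h ∈ W} Δ(h)² ∏_{i=1}^{n-1} (h_i+2)(h_i+1) q^{h_i}. Then for every increasing subset 𝒜 ⊆ W (meaning: if h ∈ 𝒜 and g ∈ W satisfies h_i ≤ g_i for all i, then g ∈ 𝒜), (1/Z_3) Σ_{h ∈ 𝒜} Δ(h)² ∏_{i=1}^{n-1} (h_i+2)(h_i+1) q^{h_i} ≤ (1/Z_2) Σ_{h ∈ 𝒜} Δ(h)² ∏_{i=1}^{n-1} h_i² q^{h_i}. -/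
open Finset Set

private lemma delta_pair (x1 x2 y1 y2 : ℝ) (hx : x1 ≤ x2) (hy : y1 ≤ y2) :
    (x2 - x1) * (y2 - y1) ≤ (min x2 y2 - min x1 y1) * (max x2 y2 - max x1 y1) := by
  rcases le_total x1 y1 with h1 | h1 <;> rcases le_total x2 y2 with h2 | h2
  · rw [min_eq_left h1, min_eq_left h2, max_eq_right h1, max_eq_right h2]
  · rw [min_eq_left h1, min_eq_right h2, max_eq_right h1, max_eq_left h2]; nlinarith
  · rw [min_eq_right h1, min_eq_left h2, max_eq_left h1, max_eq_right h2]; nlinarith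
  · rw [min_eq_right h1, min_eq_right h2, max_eq_left h1, max_eq_left h2,
      mul_comm (y2 - y1) (x2 - x1)]

private lemma coord_ineq {q : ℝ} (hq : 0 ≤ q) (a b : ℕ) :
    (((a : ℝ) + 2) * ((a : ℝ) + 1) * q ^ a) * ((b : ℝ) ^ 2 * q ^ b) ≤
      (((min a b : ℕ) : ℝ) + 2) * (((min a b : ℕ) : ℝ) + 1) * q ^ (min a b) *
        (((max a b : ℕ) : ℝ) ^ 2 * q ^ (max a b)) := by
  rcases le_total a b with hab | hab
  · rw [min_eq_left hab, max_eq_right hab]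
  · rw [min_eq_right hab, max_eq_left hab]
    have hc : (b : ℝ) ≤ a := Nat.cast_le.2 hab
    have hb0 : (0 : ℝ) ≤ b := Nat.cast_nonneg b
    have hqq : (0 : ℝ) ≤ q ^ a * q ^ b := by positivity
    have hpoly : ((a : ℝ) + 2) * ((a : ℝ) + 1) * (b : ℝ) ^ 2 ≤
        ((b : ℝ) + 2) * ((b : ℝ) + 1) * (a : ℝ) ^ 2 := by
      have ha0 : (0 : ℝ) ≤ a := Nat.cast_nonneg a
      nlinarith [mul_nonneg (mul_nonneg ha0 hb0) (sub_nonneg.2 hc),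
        mul_nonneg (add_nonneg ha0 hb0) (sub_nonneg.2 hc)]
    calc ((a : ℝ) + 2) * ((a : ℝ) + 1) * q ^ a * ((b : ℝ) ^ 2 * q ^ b)
        = (((a : ℝ) + 2) * ((a : ℝ) + 1) * (b : ℝ) ^ 2) * (q ^ a * q ^ b) := by ring
      _ ≤ (((b : ℝ) + 2) * ((b : ℝ) + 1) * (a : ℝ) ^ 2) * (q ^ a * q ^ b) :=
          mul_le_mul_of_nonneg_right hpoly hqq
      _ = _ := by ring

set_option maxHeartbeats 1000000 in
private lemma summable_pi_prod {g : ℕ → ℝ} (hg0 : ∀ x, 0 ≤ g x) (hg : Summable g) :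
    ∀ k, Summable fun h : Fin k → ℕ => ∏ i, g (h i) := by
  intro k
  induction k with
  | zero =>
      have : (fun h : Fin 0 → ℕ => ∏ i, g (h i)) = fun _ => 1 := by
        funext h; simp
      rw [this]; exact Summable.of_finite
  | succ k ih =>
      have h2 : Summable fun p : ℕ × (Fin k → ℕ) => g p.1 * ∏ i, g (p.2 i) :=
        Summable.mul_of_nonneg (f := g) (g := fun h : Fin k → ℕ => ∏ i, g (h i))
          hg ih (fun x => hg0 x) (fun h => Finset.prod_nonneg fun i _ => hg0 _)
      have h3 : Summable ((fun h : Fin (k + 1) → ℕ => ∏ i, g (h i)) ∘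
          (Fin.consEquiv fun _ => ℕ)) := by
        refine h2.congr fun p => ?_
        simp [Fin.consEquiv, Fin.prod_univ_succ]
      exact ((Fin.consEquiv fun _ => ℕ).summable_iff).1 h3

private lemma tsum_mul_tsum_le' {α : Type*} {f₁ f₂ : α → ℝ} (h₁ : ∀ x, 0 ≤ f₁ x)
    (h₂ : ∀ x, 0 ≤ f₂ x) (s₁ : Summable f₁) (s₂ : Summable f₂) {B : ℝ} (hB : 0 ≤ B)
    (h : ∀ s t : Finset α, (∑ a ∈ s, f₁ a) * ∑ a ∈ t, f₂ a ≤ B) :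
    (∑' a, f₁ a) * ∑' a, f₂ a ≤ B := by
  have step : ∀ s : Finset α, (∑ a ∈ s, f₁ a) * ∑' a, f₂ a ≤ B := by
    intro s
    rcases (Finset.sum_nonneg fun a _ => h₁ a).eq_or_lt with hs | hs
    · rw [← hs, zero_mul]; exact hB
    · rw [mul_comm, ← le_div_iff₀ hs]
      exact Summable.tsum_le_of_sum_le s₂ fun t => (le_div_iff₀ hs).2 (by rw [mul_comm]; exact h s t)
  rcases (tsum_nonneg h₂ : (0:ℝ) ≤ ∑' a, f₂ a).eq_or_lt with h2 | h2
  · rw [← h2, mul_zero]; exact hB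
  · rw [← le_div_iff₀ h2]
    exact Summable.tsum_le_of_sum_le s₁ fun s => (le_div_iff₀ h2).2 (step s)

set_option maxHeartbeats 1000000 in
theorem stmt_19 (n : ℕ) (hn : 2 ≤ n) (q : ℝ) (hq0 : 0 < q) (hq1 : q < 1)
    (W : Set (Fin (n - 1) → ℕ)) (hW : W = {h | StrictMono h})
    (Δ : (Fin (n - 1) → ℕ) → ℝ)
    (hΔ : ∀ h, Δ h = ∏ i : Fin (n - 1), ∏ j ∈ Finset.Ioi i, ((h j : ℝ) - (h i : ℝ)))
    (Z₂ Z₃ : ℝ)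
    (hZ₂ : Z₂ = ∑' h : W, (Δ h.1) ^ 2 * ∏ i, ((h.1 i : ℝ) ^ 2 * q ^ (h.1 i)))
    (hZ₃ : Z₃ = ∑' h : W, (Δ h.1) ^ 2 *
      ∏ i, (((h.1 i : ℝ) + 2) * ((h.1 i : ℝ) + 1) * q ^ (h.1 i)))
    (𝒜 : Set (Fin (n - 1) → ℕ)) (h𝒜W : 𝒜 ⊆ W)
    (h𝒜inc : ∀ h ∈ 𝒜, ∀ g ∈ W, (∀ i, h i ≤ g i) → g ∈ 𝒜) :
    (1 / Z₃) * ∑' h : 𝒜, (Δ h.1) ^ 2 *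
        ∏ i, (((h.1 i : ℝ) + 2) * ((h.1 i : ℝ) + 1) * q ^ (h.1 i))
      ≤ (1 / Z₂) * ∑' h : 𝒜, (Δ h.1) ^ 2 * ∏ i, ((h.1 i : ℝ) ^ 2 * q ^ (h.1 i)) := by
  classical
  set P₂ : (Fin (n - 1) → ℕ) → ℝ := fun h => ∏ i, ((h i : ℝ) ^ 2 * q ^ (h i)) with hP₂
  set P₃ : (Fin (n - 1) → ℕ) → ℝ :=
    fun h => ∏ i, (((h i : ℝ) + 2) * ((h i : ℝ) + 1) * q ^ (h i)) with hP₃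
  set w₂ : (Fin (n - 1) → ℕ) → ℝ := fun h => (Δ h) ^ 2 * P₂ h with hw₂
  set w₃ : (Fin (n - 1) → ℕ) → ℝ := fun h => (Δ h) ^ 2 * P₃ h with hw₃
  have hP₂0 : ∀ h, 0 ≤ P₂ h := fun h => Finset.prod_nonneg fun i _ => by positivity
  have hP₃0 : ∀ h, 0 ≤ P₃ h := fun h => Finset.prod_nonneg fun i _ => by positivity
  have hw₂0 : ∀ h, 0 ≤ w₂ h := fun h => mul_nonneg (sq_nonneg _) (hP₂0 h)
  have hw₃0 : ∀ h, 0 ≤ w₃ h := fun h => mul_nonneg (sq_nonneg _) (hP₃0 h)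
  have hWm : ∀ {h}, h ∈ W ↔ StrictMono h := fun {h} => by rw [hW]; exact Iff.rfl
  have hΔ0 : ∀ h : Fin (n - 1) → ℕ, StrictMono h → 0 ≤ Δ h := by
    intro h hh
    rw [hΔ]
    refine Finset.prod_nonneg fun i _ => Finset.prod_nonneg fun j hj => ?_
    have hij : i < j := Finset.mem_Ioi.1 hj
    have : (h i : ℝ) ≤ h j := Nat.cast_le.2 (hh hij).le
    linarith
  -- lattice stability of W and 𝒜
  have hinfW : ∀ {a b : Fin (n - 1) → ℕ}, StrictMono a → StrictMono b →
      StrictMono (a ⊓ b) := by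
    intro a b ha hb i j hij
    simp only [Pi.inf_apply, lt_min_iff]
    exact ⟨(min_le_left _ _).trans_lt (ha hij), (min_le_right _ _).trans_lt (hb hij)⟩
  have hsupW : ∀ {a b : Fin (n - 1) → ℕ}, StrictMono a → StrictMono b →
      StrictMono (a ⊔ b) := by
    intro a b ha hb i j hij
    simp only [Pi.sup_apply, max_lt_iff]
    exact ⟨(ha hij).trans_le (le_max_left _ _), (hb hij).trans_le (le_max_right _ _)⟩
  -- the core FKG-type weight inequality
  have hkeyw : ∀ a b : Fin (n - 1) → ℕ, StrictMono a → StrictMono b →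
      w₃ a * w₂ b ≤ w₃ (a ⊓ b) * w₂ (a ⊔ b) := by
    intro a b ha hb
    have hΔab : Δ a * Δ b ≤ Δ (a ⊓ b) * Δ (a ⊔ b) := by
      rw [hΔ a, hΔ b, hΔ (a ⊓ b), hΔ (a ⊔ b), ← Finset.prod_mul_distrib,
        ← Finset.prod_mul_distrib]
      refine Finset.prod_le_prod (fun i _ => mul_nonneg
        (Finset.prod_nonneg fun j hj => ?_) (Finset.prod_nonneg fun j hj => ?_))
        (fun i _ => ?_)
      · have : (a i : ℝ) ≤ a j := Nat.cast_le.2 (ha (Finset.mem_Ioi.1 hj)).le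
        linarith
      · have : (b i : ℝ) ≤ b j := Nat.cast_le.2 (hb (Finset.mem_Ioi.1 hj)).le
        linarith
      · rw [← Finset.prod_mul_distrib, ← Finset.prod_mul_distrib]
        refine Finset.prod_le_prod (fun j hj => ?_) (fun j hj => ?_)
        · have h1 : (a i : ℝ) ≤ a j := Nat.cast_le.2 (ha (Finset.mem_Ioi.1 hj)).le
          have h2 : (b i : ℝ) ≤ b j := Nat.cast_le.2 (hb (Finset.mem_Ioi.1 hj)).le
          exact mul_nonneg (by linarith) (by linarith)
        · have h1 : (a i : ℝ) ≤ a j := Nat.cast_le.2 (ha (Finset.mem_Ioi.1 hj)).le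
          have h2 : (b i : ℝ) ≤ b j := Nat.cast_le.2 (hb (Finset.mem_Ioi.1 hj)).le
          have := delta_pair (a i : ℝ) (a j : ℝ) (b i : ℝ) (b j : ℝ) h1 h2
          simpa [Pi.inf_apply, Pi.sup_apply,
            Nat.cast_min, Nat.cast_max] using this
    have hD0 : 0 ≤ Δ a * Δ b := mul_nonneg (hΔ0 a ha) (hΔ0 b hb)
    have hsq : (Δ a * Δ b) ^ 2 ≤ (Δ (a ⊓ b) * Δ (a ⊔ b)) ^ 2 :=
      pow_le_pow_left₀ hD0 hΔab 2
    have hP : P₃ a * P₂ b ≤ P₃ (a ⊓ b) * P₂ (a ⊔ b) := by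
      rw [hP₂, hP₃]
      simp only
      rw [← Finset.prod_mul_distrib, ← Finset.prod_mul_distrib]
      refine Finset.prod_le_prod (fun i _ => by positivity) (fun i _ => ?_)
      have := coord_ineq hq0.le (a i) (b i)
      simpa [Pi.inf_apply, Pi.sup_apply,
        Nat.cast_min, Nat.cast_max] using this
    calc w₃ a * w₂ b = (Δ a * Δ b) ^ 2 * (P₃ a * P₂ b) := by rw [hw₂, hw₃]; ring
      _ ≤ (Δ (a ⊓ b) * Δ (a ⊔ b)) ^ 2 * (P₃ (a ⊓ b) * P₂ (a ⊔ b)) :=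
          mul_le_mul hsq hP (mul_nonneg (hP₃0 a) (hP₂0 b)) (sq_nonneg _)
      _ = w₃ (a ⊓ b) * w₂ (a ⊔ b) := by rw [hw₂, hw₃]; ring
  -- summability
  have hqnorm : ‖q‖ < 1 := by rw [Real.norm_eq_abs, abs_of_pos hq0]; exact hq1
  set M : ℕ := (n - 1) * (n - 1) with hM
  set K : ℕ := 2 * M + 2 with hK
  set g : ℕ → ℝ := fun x => 2 * ((x : ℝ) + 1) ^ K * q ^ x with hg
  have hg0 : ∀ x, 0 ≤ g x := by intro x; rw [hg]; positivity
  have hgsum : Summable g := by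
    have h0 := summable_pow_mul_geometric_of_norm_lt_one (R := ℝ) K hqnorm
    have h1 : Summable (fun x : ℕ => ((x + 1 : ℕ) : ℝ) ^ K * q ^ (x + 1)) :=
      (summable_nat_add_iff 1).2 h0
    have h2 := h1.mul_left (2 / q)
    refine h2.congr fun x => ?_
    have hqne : q ≠ 0 := ne_of_gt hq0
    rw [hg]
    push_cast
    rw [pow_succ]
    field_simp
    ring
  have hGsum := summable_pi_prod hg0 hgsum (n - 1)
  have hΔle : ∀ h : Fin (n - 1) → ℕ, StrictMono h →
      Δ h ≤ (∏ k, ((h k : ℝ) + 1)) ^ M := by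
    intro h hh
    have hC1 : (1 : ℝ) ≤ ∏ k : Fin (n - 1), ((h k : ℝ) + 1) := by
      calc (1 : ℝ) = ∏ _k : Fin (n - 1), (1 : ℝ) := by simp
        _ ≤ ∏ k, ((h k : ℝ) + 1) := Finset.prod_le_prod (fun _ _ => zero_le_one)
            (fun k _ => by
              have : (0 : ℝ) ≤ (h k : ℝ) := Nat.cast_nonneg _
              linarith)
    rw [hΔ, hM]
    calc ∏ i : Fin (n - 1), ∏ j ∈ Finset.Ioi i, ((h j : ℝ) - (h i : ℝ))
        ≤ ∏ i : Fin (n - 1), ∏ _j ∈ Finset.Ioi i, ∏ k, ((h k : ℝ) + 1) := by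
          refine Finset.prod_le_prod (fun i _ => Finset.prod_nonneg fun j hj => ?_)
            (fun i _ => Finset.prod_le_prod (fun j hj => ?_) (fun j hj => ?_))
          · have : (h i : ℝ) ≤ h j := Nat.cast_le.2 (hh (Finset.mem_Ioi.1 hj)).le
            linarith
          · have : (h i : ℝ) ≤ h j := Nat.cast_le.2 (hh (Finset.mem_Ioi.1 hj)).le
            linarith
          · have herase : (1 : ℝ) ≤ ∏ k ∈ Finset.univ.erase j, ((h k : ℝ) + 1) := by
              calc (1 : ℝ) = ∏ _k ∈ Finset.univ.erase j, (1 : ℝ) := by simp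
                _ ≤ _ := Finset.prod_le_prod (fun _ _ => zero_le_one) (fun k _ => by
                    have : (0 : ℝ) ≤ (h k : ℝ) := Nat.cast_nonneg _
                    linarith)
            have hjpos : (0 : ℝ) ≤ (h j : ℝ) + 1 := by positivity
            have hle : (h j : ℝ) + 1 ≤ ∏ k, ((h k : ℝ) + 1) := by
              rw [← Finset.mul_prod_erase Finset.univ _ (Finset.mem_univ j)]
              exact le_mul_of_one_le_right hjpos herase
            have : (0 : ℝ) ≤ (h i : ℝ) := Nat.cast_nonneg _
            linarith
      _ = ∏ i : Fin (n - 1), (∏ k, ((h k : ℝ) + 1)) ^ (Finset.Ioi i).card := by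
          exact Finset.prod_congr rfl fun i _ => Finset.prod_const _
      _ ≤ ∏ _i : Fin (n - 1), (∏ k, ((h k : ℝ) + 1)) ^ (n - 1) := by
          refine Finset.prod_le_prod (fun i _ => by positivity) (fun i _ => ?_)
          refine pow_le_pow_right₀ hC1 ?_
          simpa using Finset.card_le_univ (Finset.Ioi i)
      _ = (∏ k, ((h k : ℝ) + 1)) ^ ((n - 1) * (n - 1)) := by
          rw [Finset.prod_const, Finset.card_univ, Fintype.card_fin, ← pow_mul]
  have coordA : ∀ x : ℕ, ((x : ℝ) + 1) ^ (2 * M) * ((x : ℝ) ^ 2 * q ^ x) ≤ g x := by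
    intro x
    have hx0 : (0 : ℝ) ≤ x := Nat.cast_nonneg x
    have h1 : (x : ℝ) ^ 2 ≤ ((x : ℝ) + 1) ^ 2 := by nlinarith
    have h2 : ((x : ℝ) + 1) ^ (2 * M) * ((x : ℝ) ^ 2 * q ^ x) ≤
        ((x : ℝ) + 1) ^ (2 * M) * (((x : ℝ) + 1) ^ 2 * q ^ x) := by
      apply mul_le_mul_of_nonneg_left (mul_le_mul_of_nonneg_right h1 (by positivity))
        (by positivity)
    have h3 : ((x : ℝ) + 1) ^ (2 * M) * (((x : ℝ) + 1) ^ 2 * q ^ x) =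
        ((x : ℝ) + 1) ^ K * q ^ x := by rw [hK, pow_add]; ring
    have h4 : (0 : ℝ) ≤ ((x : ℝ) + 1) ^ K * q ^ x := by positivity
    rw [hg]
    simp only
    linarith
  have coordB : ∀ x : ℕ,
      ((x : ℝ) + 1) ^ (2 * M) * (((x : ℝ) + 2) * ((x : ℝ) + 1) * q ^ x) ≤ g x := by
    intro x
    have hx0 : (0 : ℝ) ≤ x := Nat.cast_nonneg x
    have h1 : ((x : ℝ) + 2) * ((x : ℝ) + 1) ≤ 2 * ((x : ℝ) + 1) ^ 2 := by nlinarith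
    have h2 : ((x : ℝ) + 1) ^ (2 * M) * (((x : ℝ) + 2) * ((x : ℝ) + 1) * q ^ x) ≤
        ((x : ℝ) + 1) ^ (2 * M) * (2 * ((x : ℝ) + 1) ^ 2 * q ^ x) := by
      apply mul_le_mul_of_nonneg_left (mul_le_mul_of_nonneg_right h1 (by positivity))
        (by positivity)
    have h3 : ((x : ℝ) + 1) ^ (2 * M) * (2 * ((x : ℝ) + 1) ^ 2 * q ^ x) = g x := by
      rw [hg]; simp only; rw [hK, pow_add]; ring
    linarith
  have hD2 : ∀ h : Fin (n - 1) → ℕ, StrictMono h →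
      Δ h ^ 2 ≤ ∏ k, ((h k : ℝ) + 1) ^ (2 * M) := by
    intro h hh
    calc Δ h ^ 2 ≤ ((∏ k, ((h k : ℝ) + 1)) ^ M) ^ 2 :=
          pow_le_pow_left₀ (hΔ0 h hh) (hΔle h hh) 2
      _ = (∏ k, ((h k : ℝ) + 1)) ^ (2 * M) := by rw [← pow_mul, Nat.mul_comm]
      _ = ∏ k, ((h k : ℝ) + 1) ^ (2 * M) := (Finset.prod_pow _ _ _).symm
  have hb₂ : ∀ h : Fin (n - 1) → ℕ, StrictMono h → w₂ h ≤ ∏ i, g (h i) := by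
    intro h hh
    calc w₂ h = Δ h ^ 2 * P₂ h := by rw [hw₂]
      _ ≤ (∏ k, ((h k : ℝ) + 1) ^ (2 * M)) * P₂ h :=
          mul_le_mul_of_nonneg_right (hD2 h hh) (hP₂0 h)
      _ = ∏ i, (((h i : ℝ) + 1) ^ (2 * M) * ((h i : ℝ) ^ 2 * q ^ (h i))) := by
          rw [hP₂, ← Finset.prod_mul_distrib]
      _ ≤ ∏ i, g (h i) :=
          Finset.prod_le_prod (fun i _ => by positivity) (fun i _ => coordA (h i))
  have hb₃ : ∀ h : Fin (n - 1) → ℕ, StrictMono h → w₃ h ≤ ∏ i, g (h i) := by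
    intro h hh
    calc w₃ h = Δ h ^ 2 * P₃ h := by rw [hw₃]
      _ ≤ (∏ k, ((h k : ℝ) + 1) ^ (2 * M)) * P₃ h :=
          mul_le_mul_of_nonneg_right (hD2 h hh) (hP₃0 h)
      _ = ∏ i, (((h i : ℝ) + 1) ^ (2 * M) *
            (((h i : ℝ) + 2) * ((h i : ℝ) + 1) * q ^ (h i))) := by
          rw [hP₃, ← Finset.prod_mul_distrib]
      _ ≤ ∏ i, g (h i) :=
          Finset.prod_le_prod (fun i _ => by positivity) (fun i _ => coordB (h i))
  have hsum₂ : Summable (W.indicator w₂) := by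
    refine Summable.of_nonneg_of_le
      (fun h => Set.indicator_nonneg (fun x _ => hw₂0 x) h) (fun h => ?_) hGsum
    by_cases hhW : h ∈ W
    · rw [Set.indicator_of_mem hhW]; exact hb₂ h (hWm.1 hhW)
    · rw [Set.indicator_of_notMem hhW]; exact Finset.prod_nonneg fun i _ => hg0 _
  have hsum₃ : Summable (W.indicator w₃) := by
    refine Summable.of_nonneg_of_le
      (fun h => Set.indicator_nonneg (fun x _ => hw₃0 x) h) (fun h => ?_) hGsum
    by_cases hhW : h ∈ W
    · rw [Set.indicator_of_mem hhW]; exact hb₃ h (hWm.1 hhW)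
    · rw [Set.indicator_of_notMem hhW]; exact Finset.prod_nonneg fun i _ => hg0 _
  have hsumA₂ : Summable (𝒜.indicator w₂) :=
    Summable.of_nonneg_of_le (fun h => Set.indicator_nonneg (fun x _ => hw₂0 x) h)
      (fun h => Set.indicator_le_indicator_of_subset h𝒜W hw₂0 h) hsum₂
  have hsumA₃ : Summable (𝒜.indicator w₃) :=
    Summable.of_nonneg_of_le (fun h => Set.indicator_nonneg (fun x _ => hw₃0 x) h)
      (fun h => Set.indicator_le_indicator_of_subset h𝒜W hw₃0 h) hsum₃
  -- rewrite the subtype tsums as indicator tsums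
  have hZ₂' : Z₂ = ∑' h, W.indicator w₂ h := by
    rw [hZ₂, ← tsum_subtype W w₂]
  have hZ₃' : Z₃ = ∑' h, W.indicator w₃ h := by
    rw [hZ₃, ← tsum_subtype W w₃]
  have hA₂ : (∑' h : 𝒜, (Δ h.1) ^ 2 * ∏ i, ((h.1 i : ℝ) ^ 2 * q ^ (h.1 i)))
      = ∑' h, 𝒜.indicator w₂ h := by
    rw [← tsum_subtype 𝒜 w₂]
  have hA₃ : (∑' h : 𝒜, (Δ h.1) ^ 2 *
        ∏ i, (((h.1 i : ℝ) + 2) * ((h.1 i : ℝ) + 1) * q ^ (h.1 i)))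
      = ∑' h, 𝒜.indicator w₃ h := by
    rw [← tsum_subtype 𝒜 w₃]
  -- positivity of the partition functions
  have hmem0 : (fun i : Fin (n - 1) => (i : ℕ) + 1) ∈ W := by
    rw [hW]
    intro i j hij
    have : (i : ℕ) < (j : ℕ) := hij
    simpa using Nat.succ_lt_succ this
  have hΔpos : 0 < Δ (fun i : Fin (n - 1) => (i : ℕ) + 1) := by
    rw [hΔ]
    refine Finset.prod_pos fun i _ => Finset.prod_pos fun j hj => ?_
    have hij : i < j := Finset.mem_Ioi.1 hj
    have : ((i : ℕ) : ℝ) < ((j : ℕ) : ℝ) := by exact_mod_cast hij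
    push_cast
    linarith
  have hZ₂pos : 0 < ∑' h, W.indicator w₂ h := by
    refine Summable.tsum_pos hsum₂ (fun h => Set.indicator_nonneg (fun x _ => hw₂0 x) h)
      (fun i : Fin (n - 1) => (i : ℕ) + 1) ?_
    rw [Set.indicator_of_mem hmem0, hw₂]
    refine mul_pos (pow_pos hΔpos 2) ?_
    rw [hP₂]
    refine Finset.prod_pos fun i _ => mul_pos ?_ (pow_pos hq0 _)
    have : (0 : ℝ) < ((i : ℕ) : ℝ) + 1 := by positivity
    push_cast
    positivity
  have hZ₃pos : 0 < ∑' h, W.indicator w₃ h := by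
    refine Summable.tsum_pos hsum₃ (fun h => Set.indicator_nonneg (fun x _ => hw₃0 x) h)
      (fun i : Fin (n - 1) => (i : ℕ) + 1) ?_
    rw [Set.indicator_of_mem hmem0, hw₃]
    refine mul_pos (pow_pos hΔpos 2) ?_
    rw [hP₃]
    refine Finset.prod_pos fun i _ => mul_pos (mul_pos ?_ ?_) (pow_pos hq0 _) <;>
      push_cast <;> positivity
  -- the four functions condition
  have hcond : ∀ a b : Fin (n - 1) → ℕ,
      𝒜.indicator w₃ a * W.indicator w₂ b ≤
        W.indicator w₃ (a ⊓ b) * 𝒜.indicator w₂ (a ⊔ b) := by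
    intro a b
    by_cases ha : a ∈ 𝒜
    · by_cases hb : b ∈ W
      · have hsA : StrictMono a := hWm.1 (h𝒜W ha)
        have hsB : StrictMono b := hWm.1 hb
        have hmi : a ⊓ b ∈ W := hWm.2 (hinfW hsA hsB)
        have hma : a ⊔ b ∈ 𝒜 := h𝒜inc a ha (a ⊔ b) (hWm.2 (hsupW hsA hsB))
          (fun i => by rw [Pi.sup_apply]; exact le_sup_left)
        rw [Set.indicator_of_mem ha, Set.indicator_of_mem hb,
          Set.indicator_of_mem hmi, Set.indicator_of_mem hma]
        exact hkeyw a b hsA hsB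
      · rw [Set.indicator_of_notMem hb, mul_zero]
        exact mul_nonneg (Set.indicator_nonneg (fun x _ => hw₃0 x) _)
          (Set.indicator_nonneg (fun x _ => hw₂0 x) _)
    · rw [Set.indicator_of_notMem ha, zero_mul]
      exact mul_nonneg (Set.indicator_nonneg (fun x _ => hw₃0 x) _)
        (Set.indicator_nonneg (fun x _ => hw₂0 x) _)
  -- the key tsum inequality via the four functions theorem
  have hkey : (∑' h, 𝒜.indicator w₃ h) * (∑' h, W.indicator w₂ h) ≤
      (∑' h, W.indicator w₃ h) * (∑' h, 𝒜.indicator w₂ h) := by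
    refine tsum_mul_tsum_le' (fun x => Set.indicator_nonneg (fun y _ => hw₃0 y) x)
      (fun x => Set.indicator_nonneg (fun y _ => hw₂0 y) x) hsumA₃ hsum₂
      (mul_nonneg (tsum_nonneg fun x => Set.indicator_nonneg (fun y _ => hw₃0 y) x)
        (tsum_nonneg fun x => Set.indicator_nonneg (fun y _ => hw₂0 y) x))
      (fun s t => ?_)
    have h4 := four_functions_theorem (𝒜.indicator w₃) (W.indicator w₂)
      (W.indicator w₃) (𝒜.indicator w₂)
      (fun x => Set.indicator_nonneg (fun y _ => hw₃0 y) x)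
      (fun x => Set.indicator_nonneg (fun y _ => hw₂0 y) x)
      (fun x => Set.indicator_nonneg (fun y _ => hw₃0 y) x)
      (fun x => Set.indicator_nonneg (fun y _ => hw₂0 y) x)
      hcond s t
    refine h4.trans ?_
    refine mul_le_mul ?_ ?_ ?_ ?_
    · exact Summable.sum_le_tsum _ (fun x _ => Set.indicator_nonneg (fun y _ => hw₃0 y) x) hsum₃
    · exact Summable.sum_le_tsum _ (fun x _ => Set.indicator_nonneg (fun y _ => hw₂0 y) x) hsumA₂
    · exact Finset.sum_nonneg fun x _ => Set.indicator_nonneg (fun y _ => hw₂0 y) x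
    · exact tsum_nonneg fun x => Set.indicator_nonneg (fun y _ => hw₃0 y) x
  -- conclusion
  rw [hA₂, hA₃, hZ₂', hZ₃', one_div_mul_eq_div, one_div_mul_eq_div,
    div_le_div_iff₀ hZ₃pos hZ₂pos]
  exact hkey.trans (le_of_eq (mul_comm _ _))
end
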